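/- arXiv:2007.01610 — 2 statements merged into one kernel-verified Lean document; each statement's English description precedes it below -/
import Mathlib

section
/- (FO,L_S)-separability coincides with projective (FO,L_S)-separability for every fragment L_S of FO containing all UCQs: a labeled FO-KB is projectively L_S-separable iff it is non-projectively L_S-separable. Moreover, for any two fragments L_S and L_S' of FO each containing all UCQs, a labeled FO-KB is L_S-separable iff it is L_S'-separable. -/
namespace Sep

/-! ## First-order syntax over relation symbols (arity, code) and variables ℕ.
Constants are natural numbers; formulas contain no constants. -/

inductive Fml : Type where
  | eq : ℕ → ℕ → Fml
  | rel : (k : ℕ) → ℕ → (Fin k → ℕ) → Fml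
  | neg : Fml → Fml
  | and : Fml → Fml → Fml
  | or : Fml → Fml → Fml
  | ex : ℕ → Fml → Fml
  | all : ℕ → Fml → Fml

namespace Fml

/-- Implication, as an abbreviation. -/
def imp (φ ψ : Fml) : Fml := .or (.neg φ) ψ

/-- Free variables of a formula. -/
def free : Fml → Set ℕ
  | eq x y => {x, y}
  | rel _ _ v => Set.range v
  | neg φ => φ.free
  | and φ ψ => φ.free ∪ ψ.free
  | or φ ψ => φ.free ∪ ψ.free
  | ex y φ => φ.free \ {y}
  | all y φ => φ.free \ {y}

/-- All variables (free or bound) occurring in a formula. -/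
def vars : Fml → Set ℕ
  | eq x y => {x, y}
  | rel _ _ v => Set.range v
  | neg φ => φ.vars
  | and φ ψ => φ.vars ∪ ψ.vars
  | or φ ψ => φ.vars ∪ ψ.vars
  | ex y φ => insert y φ.vars
  | all y φ => insert y φ.vars

/-- Variables occurring in equality atoms of a formula. -/
def eqVars : Fml → Set ℕ
  | eq x y => {x, y}
  | rel _ _ _ => ∅
  | neg φ => φ.eqVars
  | and φ ψ => φ.eqVars ∪ ψ.eqVars
  | or φ ψ => φ.eqVars ∪ ψ.eqVars
  | ex _ φ => φ.eqVars
  | all _ φ => φ.eqVars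

/-- The signature (set of relation symbols, as pairs (arity, code)) of a formula. -/
def sig : Fml → Set (ℕ × ℕ)
  | eq _ _ => ∅
  | rel k R _ => {(k, R)}
  | neg φ => φ.sig
  | and φ ψ => φ.sig ∪ ψ.sig
  | or φ ψ => φ.sig ∪ ψ.sig
  | ex _ φ => φ.sig
  | all _ φ => φ.sig

/-- Size of a formula (number of symbols, names counting as one symbol). -/
def size : Fml → ℕ
  | eq _ _ => 3
  | rel k _ _ => 1 + k
  | neg φ => 1 + φ.size
  | and φ ψ => 1 + φ.size + ψ.size
  | or φ ψ => 1 + φ.size + ψ.size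
  | ex _ φ => 2 + φ.size
  | all _ φ => 2 + φ.size

/-- Subformulas of a formula. -/
def subfmls : Fml → Set Fml
  | eq x y => {.eq x y}
  | rel k R v => {.rel k R v}
  | neg φ => insert (.neg φ) φ.subfmls
  | and φ ψ => insert (.and φ ψ) (φ.subfmls ∪ ψ.subfmls)
  | or φ ψ => insert (.or φ ψ) (φ.subfmls ∪ ψ.subfmls)
  | ex y φ => insert (.ex y φ) φ.subfmls
  | all y φ => insert (.all y φ) φ.subfmls

end Fml

/-- Conjunction of a list of formulas (`x₀ = x₀` as the empty conjunction). -/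
def bigAnd : List Fml → Fml
  | [] => .eq 0 0
  | [φ] => φ
  | φ :: ψ :: rest => .and φ (bigAnd (ψ :: rest))

/-- Disjunction of a list of formulas. -/
def bigOr : List Fml → Fml
  | [] => .neg (.eq 0 0)
  | [φ] => φ
  | φ :: ψ :: rest => .or φ (bigOr (ψ :: rest))

/-- Existential quantification over a list of variables. -/
def exList (ys : List ℕ) (φ : Fml) : Fml := ys.foldr Fml.ex φ

/-- Universal quantification over a list of variables. -/
def allList (ys : List ℕ) (φ : Fml) : Fml := ys.foldr Fml.all φ

/-- The atom `R(x₀,…,x_{k-1})` over the fixed tuple of distinct variables `0,…,k-1`. -/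
def baseAtom (k R : ℕ) : Fml := .rel k R fun i => (i : ℕ)

/-- The formula `∃ y⃗₁ (R(x⃗_k) ∧ ¬ x_u = x_w)` where `y⃗₁` is `x⃗_k` without `x_u`. -/
def connFml (k R u w : ℕ) : Fml :=
  exList ((List.range k).filter fun y => y != u) (.and (baseAtom k R) (.neg (.eq u w)))

/-! ## Structures and satisfaction -/

/-- A relational structure: a nonempty domain, interpretations of all relation
symbols, and interpretations of all constants (no unique name assumption). -/
structure Str : Type 1 where
  Dom : Type
  dom_nonempty : Nonempty Dom
  rel : (k : ℕ) → ℕ → (Fin k → Dom) → Prop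
  const : ℕ → Dom

namespace Fml

/-- Satisfaction of a formula in a structure under a variable assignment. -/
def Sat (A : Str) : Fml → (ℕ → A.Dom) → Prop
  | eq x y, v => v x = v y
  | rel k R args, v => A.rel k R fun i => v (args i)
  | neg φ, v => ¬ φ.Sat A v
  | and φ ψ, v => φ.Sat A v ∧ ψ.Sat A v
  | or φ ψ, v => φ.Sat A v ∨ ψ.Sat A v
  | ex y φ, v => ∃ d : A.Dom, φ.Sat A (Function.update v y d)
  | all y φ, v => ∀ d : A.Dom, φ.Sat A (Function.update v y d)

/-- Satisfaction relativized to a subset of the domain (quantifiers range over the subset). -/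
def SatIn (A : Str) (Dsub : Set A.Dom) : Fml → (ℕ → A.Dom) → Prop
  | eq x y, v => v x = v y
  | rel k R args, v => A.rel k R fun i => v (args i)
  | neg φ, v => ¬ φ.SatIn A Dsub v
  | and φ ψ, v => φ.SatIn A Dsub v ∧ ψ.SatIn A Dsub v
  | or φ ψ, v => φ.SatIn A Dsub v ∨ ψ.SatIn A Dsub v
  | ex y φ, v => ∃ d ∈ Dsub, φ.SatIn A Dsub (Function.update v y d)
  | all y φ, v => ∀ d ∈ Dsub, φ.SatIn A Dsub (Function.update v y d)

end Fml


/-! ## Databases and knowledge bases -/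

/-- A ground atom `R(a⃗)` over constants (natural numbers). -/
structure Atom : Type where
  arity : ℕ
  rel : ℕ
  args : Fin arity → ℕ

/-- Rename the constants of an atom. -/
def Atom.mapC (f : ℕ → ℕ) (a : Atom) : Atom := ⟨a.arity, a.rel, f ∘ a.args⟩

/-- An atom holds in a structure under an interpretation of the constants. -/
def Atom.Holds (a : Atom) (A : Str) (h : ℕ → A.Dom) : Prop :=
  A.rel a.arity a.rel fun i => h (a.args i)

/-- A database: a finite set of ground atoms. -/
structure Database : Type where
  atoms : Set Atom
  finite : atoms.Finite

/-- The constants occurring in a database. -/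
def Database.consts (D : Database) : Set ℕ := ⋃ a ∈ D.atoms, Set.range a.args

lemma Database.consts_finite (D : Database) : D.consts.Finite :=
  D.finite.biUnion fun _ _ => Set.finite_range _

/-- Number of constants of a database (used as its size `|D|`). -/
noncomputable def Database.csize (D : Database) : ℕ := D.consts.ncard

/-- The signature of a database. -/
def Database.sig (D : Database) : Set (ℕ × ℕ) := (fun a => (a.arity, a.rel)) '' D.atoms

/-- Two constants are adjacent in the Gaifman graph of a database. -/
def Database.adj (D : Database) (c d : ℕ) : Prop :=
  ∃ a ∈ D.atoms, c ∈ Set.range a.args ∧ d ∈ Set.range a.args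

/-- Restriction of a database to the atoms containing a constant reachable
from the set `S` in the Gaifman graph. -/
def Database.conRestrictSet (D : Database) (S : Set ℕ) : Database where
  atoms := {a | a ∈ D.atoms ∧ ∃ c ∈ S, ∃ d ∈ Set.range a.args, Relation.ReflTransGen D.adj c d}
  finite := D.finite.subset fun _ ha => ha.1

/-- `D_{con(a⃗)}`: restriction of `D` to the constants reachable from `[a⃗]`. -/
def Database.conRestrict (D : Database) {n : ℕ} (t : Fin n → ℕ) : Database :=
  D.conRestrictSet (Set.range t)

/-- A knowledge base: a finite ontology (set of formulas) and a database. -/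
structure KB : Type where
  onto : Set Fml
  onto_finite : onto.Finite
  db : Database

/-- The signature of a KB. -/
def KB.sig (K : KB) : Set (ℕ × ℕ) := (⋃ φ ∈ K.onto, φ.sig) ∪ K.db.sig

/-- Size of the ontology of a KB. -/
noncomputable def KB.ontoSize (K : KB) : ℕ := K.onto_finite.toFinset.sum Fml.size

/-- A structure is a model of a KB if it satisfies every sentence of the
ontology and every ground atom of the database. -/
def Str.IsModel (A : Str) (K : KB) : Prop :=
  (∀ φ ∈ K.onto, ∀ v : ℕ → A.Dom, φ.Sat A v) ∧ ∀ a ∈ K.db.atoms, a.Holds A A.const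

/-- Satisfiability of a KB. -/
def KB.Satisfiable (K : KB) : Prop := ∃ A : Str, A.IsModel K

/-- `K ⊨ φ(t⃗)`: every model of `K` satisfies `φ` at the tuple of constants `t⃗`. -/
def KB.entails (K : KB) {n : ℕ} (φ : Fml) (t : Fin n → ℕ) : Prop :=
  ∀ A : Str, A.IsModel K → ∀ v : ℕ → A.Dom, (∀ i : Fin n, v i.1 = A.const (t i)) → φ.Sat A v

/-! ## Separability -/

/-- `φ(x₀,…,x_{n-1})` (weakly) separates `(K, P, N)`. -/
def Separates {n : ℕ} (K : KB) (P N : Set (Fin n → ℕ)) (φ : Fml) : Prop :=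
  (∀ m ∈ φ.free, m < n) ∧ (∀ a ∈ P, K.entails φ a) ∧ ∀ b ∈ N, ¬ K.entails φ b

/-- `φ(x₀,…,x_{n-1})` strongly separates `(K, P, N)`. -/
def StronglySeparates {n : ℕ} (K : KB) (P N : Set (Fin n → ℕ)) (φ : Fml) : Prop :=
  (∀ m ∈ φ.free, m < n) ∧ (∀ a ∈ P, K.entails φ a) ∧ ∀ b ∈ N, K.entails (Fml.neg φ) b

/-- Projective separability in a language `L` (arbitrary helper symbols allowed). -/
def ProjSeparable (L : Set Fml) {n : ℕ} (K : KB) (P N : Set (Fin n → ℕ)) : Prop :=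
  ∃ φ ∈ L, Separates K P N φ

/-- Non-projective separability in a language `L` (only symbols of `sig(K)`). -/
def NonProjSeparable (L : Set Fml) {n : ℕ} (K : KB) (P N : Set (Fin n → ℕ)) : Prop :=
  ∃ φ ∈ L, φ.sig ⊆ K.sig ∧ Separates K P N φ

/-- Projective strong separability in a language `L`. -/
def ProjStronglySeparable (L : Set Fml) {n : ℕ} (K : KB) (P N : Set (Fin n → ℕ)) : Prop :=
  ∃ φ ∈ L, StronglySeparates K P N φ

/-- Non-projective strong separability in a language `L`. -/
def NonProjStronglySeparable (L : Set Fml) {n : ℕ} (K : KB) (P N : Set (Fin n → ℕ)) : Prop :=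
  ∃ φ ∈ L, φ.sig ⊆ K.sig ∧ StronglySeparates K P N φ

/-- A fragment of FO: a set of formulas closed under conjunction. -/
def IsFragment (L : Set Fml) : Prop := ∀ φ ∈ L, ∀ ψ ∈ L, Fml.and φ ψ ∈ L

/-! ## Homomorphisms from databases to structures -/

/-- `h` is a homomorphism from the database `D` into the structure `A`
(constants need not be preserved). -/
def DbHom (D : Database) (A : Str) (h : ℕ → A.Dom) : Prop :=
  ∀ a ∈ D.atoms, a.Holds A h

/-- `D,t⃗ → A,g⃗`: a homomorphism of pointed structures. -/
def PointedHom (D : Database) {n : ℕ} (t : Fin n → ℕ) (A : Str) (g : Fin n → A.Dom) : Prop :=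
  ∃ h : ℕ → A.Dom, DbHom D A h ∧ ∀ i : Fin n, h (t i) = g i

/-! ## The canonical CQ of a pointed database -/

/-- The variable associated with a constant `c` by the canonical CQ of `(D, t⃗)`:
the least answer variable `i` with `t i = c` if it exists, otherwise `n + c`. -/
noncomputable def varOf {n : ℕ} (t : Fin n → ℕ) (c : ℕ) : ℕ :=
  if ∃ i : Fin n, t i = c then sInf {m : ℕ | ∃ h : m < n, t ⟨m, h⟩ = c} else n + c

lemma Database.qvars_finite (D : Database) {n : ℕ} (t : Fin n → ℕ) :
    (D.consts \ Set.range t).Finite :=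
  D.consts_finite.subset Set.diff_subset

/-- The canonical CQ `φ_{D,t⃗}(x₀,…,x_{n-1})` of a pointed database. -/
noncomputable def canonCQ (D : Database) {n : ℕ} (t : Fin n → ℕ) : Fml :=
  exList ((D.qvars_finite t).toFinset.toList.map fun c => n + c)
    (bigAnd
      ((D.finite.toFinset.toList.map fun a =>
          Fml.rel a.arity a.rel fun i => varOf t (a.args i))
        ++
       ((List.finRange n ×ˢ List.finRange n).filterMap fun p =>
          if t p.1 = t p.2 then some (Fml.eq p.1.1 p.2.1) else none)))

/-- The canonical UCQ `⋁_{a⃗ ∈ P} φ_{D_{con(a⃗)},a⃗}`. -/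
noncomputable def canonUCQ (K : KB) {n : ℕ} (P : Set (Fin n → ℕ)) (hP : P.Finite) : Fml :=
  bigOr (hP.toFinset.toList.map fun t => canonCQ (K.db.conRestrict t) t)

/-! ## The merged database `D_{a⃗ = b⃗}` -/

/-- Equivalence identifying (the code of) `a i` with (the code of) the copy of `b i`. -/
def mergeEquiv {n : ℕ} (a b : Fin n → ℕ) : ℕ → ℕ → Prop :=
  Relation.ReflTransGen fun x y =>
    (∃ i : Fin n, x = 2 * a i ∧ y = 2 * b i + 1) ∨ ∃ i : Fin n, y = 2 * a i ∧ x = 2 * b i + 1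

/-- Canonical representative of the equivalence class. -/
noncomputable def mergeRep {n : ℕ} (a b : Fin n → ℕ) (x : ℕ) : ℕ :=
  sInf {y | mergeEquiv a b x y}

/-- `D_{a⃗ = b⃗}`: the union of `D` with a disjoint copy of itself in which
`a i` is identified with the copy of `b i`, for every `i`. -/
noncomputable def Database.merge (D : Database) {n : ℕ} (a b : Fin n → ℕ) : Database where
  atoms := (Atom.mapC (fun c => mergeRep a b (2 * c)) '' D.atoms) ∪
           (Atom.mapC (fun c => mergeRep a b (2 * c + 1)) '' D.atoms)
  finite := (D.finite.image _).union (D.finite.image _)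


/-! ## Fragments of FO -/

/-- Atomic formulas: equalities and relational atoms. -/
inductive IsAtomic : Fml → Prop
  | eq (x y : ℕ) : IsAtomic (.eq x y)
  | rel (k R : ℕ) (v : Fin k → ℕ) : IsAtomic (.rel k R v)

/-- Relational atoms. -/
inductive IsRelAtom : Fml → Prop
  | rel (k R : ℕ) (v : Fin k → ℕ) : IsRelAtom (.rel k R v)

/-- Conjunctions of atomic formulas. -/
inductive IsQFConj : Fml → Prop
  | atom {φ : Fml} : IsAtomic φ → IsQFConj φ
  | and {φ ψ : Fml} : IsQFConj φ → IsQFConj ψ → IsQFConj (.and φ ψ)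

/-- Conjunctive queries: existentially quantified conjunctions of relational
atoms and equalities between free variables. -/
inductive IsCQ : Fml → Prop
  | base {φ : Fml} : IsQFConj φ → IsCQ φ
  | ex {φ : Fml} (y : ℕ) : IsCQ φ → y ∉ φ.eqVars → IsCQ (.ex y φ)

/-- Unions of conjunctive queries: disjunctions of CQs with the same free variables. -/
inductive IsUCQ : Fml → Prop
  | cq {φ : Fml} : IsCQ φ → IsUCQ φ
  | or {φ ψ : Fml} : IsUCQ φ → IsUCQ ψ → φ.free = ψ.free → IsUCQ (.or φ ψ)

def UCQs : Set Fml := {φ | IsUCQ φ}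

/-- The guarded fragment GF. -/
inductive IsGF : Fml → Prop
  | eq (x y : ℕ) : IsGF (.eq x y)
  | rel (k R : ℕ) (v : Fin k → ℕ) : IsGF (.rel k R v)
  | neg {φ : Fml} : IsGF φ → IsGF (.neg φ)
  | and {φ ψ : Fml} : IsGF φ → IsGF ψ → IsGF (.and φ ψ)
  | or {φ ψ : Fml} : IsGF φ → IsGF ψ → IsGF (.or φ ψ)
  | exg (ys : List ℕ) {α φ : Fml} : IsAtomic α → IsGF φ → φ.free ⊆ α.free →
      (∀ y ∈ ys, y ∈ α.free) → IsGF (exList ys (.and α φ))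
  | allg (ys : List ℕ) {α φ : Fml} : IsAtomic α → IsGF φ → φ.free ⊆ α.free →
      (∀ y ∈ ys, y ∈ α.free) → IsGF (allList ys (α.imp φ))

def GFs : Set Fml := {φ | IsGF φ}

/-- The open guarded fragment openGF: all subformulas are open and equality is
never used as a guard. -/
inductive IsOpenGF : Fml → Prop
  | eq (x y : ℕ) : IsOpenGF (.eq x y)
  | rel (k R : ℕ) (v : Fin k → ℕ) : 0 < k → IsOpenGF (.rel k R v)
  | neg {φ : Fml} : IsOpenGF φ → IsOpenGF (.neg φ)
  | and {φ ψ : Fml} : IsOpenGF φ → IsOpenGF ψ → IsOpenGF (.and φ ψ)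
  | or {φ ψ : Fml} : IsOpenGF φ → IsOpenGF ψ → IsOpenGF (.or φ ψ)
  | exg (ys : List ℕ) {α φ : Fml} : IsRelAtom α → IsOpenGF φ → φ.free ⊆ α.free →
      (∀ y ∈ ys, y ∈ α.free) → ((Fml.and α φ).free \ {y | y ∈ ys}).Nonempty →
      IsOpenGF (exList ys (.and α φ))
  | allg (ys : List ℕ) {α φ : Fml} : IsRelAtom α → IsOpenGF φ → φ.free ⊆ α.free →
      (∀ y ∈ ys, y ∈ α.free) → ((α.imp φ).free \ {y | y ∈ ys}).Nonempty →
      IsOpenGF (allList ys (α.imp φ))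

def OpenGFs : Set Fml := {φ | IsOpenGF φ}

/-- The guarded negation fragment GNFO. -/
inductive IsGNFO : Fml → Prop
  | eq (x y : ℕ) : IsGNFO (.eq x y)
  | rel (k R : ℕ) (v : Fin k → ℕ) : IsGNFO (.rel k R v)
  | and {φ ψ : Fml} : IsGNFO φ → IsGNFO ψ → IsGNFO (.and φ ψ)
  | or {φ ψ : Fml} : IsGNFO φ → IsGNFO ψ → IsGNFO (.or φ ψ)
  | ex (y : ℕ) {φ : Fml} : IsGNFO φ → IsGNFO (.ex y φ)
  | gneg {α φ : Fml} : IsAtomic α → IsGNFO φ → φ.free ⊆ α.free → IsGNFO (.and α (.neg φ))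

def GNFOs : Set Fml := {φ | IsGNFO φ}

/-- The two-variable fragment FO²: only the two fixed variables `0` and `1` are used. -/
def FO2s : Set Fml := {φ : Fml | φ.vars ⊆ {0, 1}}

/-- Two variables are adjacent in the Gaifman graph of a formula (they co-occur
in an atom of the formula). -/
def Fml.varAdj (φ : Fml) (x y : ℕ) : Prop :=
  ∃ ψ ∈ φ.subfmls, IsAtomic ψ ∧ x ∈ ψ.free ∧ y ∈ ψ.free

/-- A rooted CQ: every variable is reachable from an answer (free) variable in
the Gaifman graph of the CQ. -/
def IsRootedCQ (φ : Fml) : Prop :=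
  IsCQ φ ∧ ∀ x ∈ φ.vars, ∃ u ∈ φ.free, Relation.ReflTransGen φ.varAdj u x

/-- Rooted UCQs. -/
inductive IsRootedUCQ : Fml → Prop
  | cq {φ : Fml} : IsRootedCQ φ → IsRootedUCQ φ
  | or {φ ψ : Fml} : IsRootedUCQ φ → IsRootedUCQ ψ → φ.free = ψ.free → IsRootedUCQ (.or φ ψ)

/-! ## ALCI concepts -/

/-- ALCI concepts: `⊤`, concept names, `¬`, `⊓`, and `∃R.C`/`∃R⁻.C`
(the Boolean indicates an inverse role). -/
inductive Concept : Type where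
  | top : Concept
  | atom : ℕ → Concept
  | neg : Concept → Concept
  | inter : Concept → Concept → Concept
  | exRole : Bool → ℕ → Concept → Concept

namespace Concept

/-- Extension of a concept in a structure. -/
def interp (A : Str) : Concept → Set A.Dom
  | top => Set.univ
  | atom c => {d | A.rel 1 c ![d]}
  | neg C => (C.interp A)ᶜ
  | inter C D => C.interp A ∩ D.interp A
  | exRole inv R C => {d | ∃ e ∈ C.interp A, if inv then A.rel 2 R ![e, d] else A.rel 2 R ![d, e]}

/-- Signature of a concept. -/
def csig : Concept → Set (ℕ × ℕ)
  | top => ∅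
  | atom c => {(1, c)}
  | neg C => C.csig
  | inter C D => C.csig ∪ D.csig
  | exRole _ R C => insert (2, R) C.csig

/-- Size of a concept. -/
def size : Concept → ℕ
  | top => 1
  | atom _ => 1
  | neg C => 1 + C.size
  | inter C D => 1 + C.size + D.size
  | exRole _ _ C => 2 + C.size

/-- Subconcepts of a concept. -/
def subconcepts : Concept → Set Concept
  | top => {top}
  | atom c => {atom c}
  | neg C => insert (neg C) C.subconcepts
  | inter C D => insert (inter C D) (C.subconcepts ∪ D.subconcepts)
  | exRole i R C => insert (exRole i R C) C.subconcepts

/-- The standard translation of a concept into an FO formula with free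
variable `x ∈ {0,1}` (the other of the two variables is `1 - x`). -/
def toFml : Concept → ℕ → Fml
  | top, x => .eq x x
  | atom c, x => .rel 1 c ![x]
  | neg C, x => .neg (C.toFml x)
  | inter C D, x => .and (C.toFml x) (D.toFml x)
  | exRole inv R C, x =>
      .ex (1 - x) (.and (if inv then Fml.rel 2 R ![1 - x, x] else Fml.rel 2 R ![x, 1 - x])
        (C.toFml (1 - x)))

end Concept

/-- ALCI concepts, viewed as FO formulas in the free variable `x₀`. -/
def ALCIs : Set Fml := {φ | ∃ C : Concept, φ = C.toFml 0}


/-! ## ALCI knowledge bases, types, bisimulations -/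

/-- The FO translation `∀x₀∀x₁ (C(x₀) → D(x₀))` of a concept inclusion. -/
def CIfml (p : Concept × Concept) : Fml :=
  .all 1 (.all 0 ((p.1.toFml 0).imp (p.2.toFml 0)))

/-- An ALCI knowledge base: a finite set of concept inclusions together with a
database containing only unary and binary atoms. -/
structure ALCIKB : Type where
  onto : Set (Concept × Concept)
  onto_finite : onto.Finite
  db : Database
  db_arity : ∀ a ∈ db.atoms, a.arity = 1 ∨ a.arity = 2

/-- The underlying FO knowledge base of an ALCI KB. -/
def ALCIKB.toKB (K : ALCIKB) : KB where
  onto := CIfml '' K.onto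
  onto_finite := K.onto_finite.image _
  db := K.db

/-- Signature of an ALCI KB. -/
def ALCIKB.sigK (K : ALCIKB) : Set (ℕ × ℕ) := K.toKB.sig

/-- Size of the ontology of an ALCI KB. -/
noncomputable def ALCIKB.ontoSize (K : ALCIKB) : ℕ :=
  K.onto_finite.toFinset.sum fun p => p.1.size + p.2.size + 1

/-- `cl(K)`: the concepts occurring in `K` together with `∃R.⊤`, `∃R⁻.⊤` for all
role names of `sig(K)`, closed under subconcepts and single negation. -/
def ALCIKB.cl (K : ALCIKB) : Set Concept :=
  ((⋃ p ∈ K.onto, p.1.subconcepts ∪ p.2.subconcepts) ∪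
     (⋃ C ∈ {C : Concept | ∃ a ∈ K.db.atoms, a.arity = 1 ∧ C = Concept.atom a.rel}, C.subconcepts) ∪
     (⋃ C ∈ {C : Concept | ∃ R i, ((2 : ℕ), R) ∈ K.sigK ∧ C = Concept.exRole i R Concept.top},
        C.subconcepts)) ∪
  Concept.neg ''
    ((⋃ p ∈ K.onto, p.1.subconcepts ∪ p.2.subconcepts) ∪
     (⋃ C ∈ {C : Concept | ∃ a ∈ K.db.atoms, a.arity = 1 ∧ C = Concept.atom a.rel}, C.subconcepts) ∪
     (⋃ C ∈ {C : Concept | ∃ R i, ((2 : ℕ), R) ∈ K.sigK ∧ C = Concept.exRole i R Concept.top},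
        C.subconcepts))

/-- `tp_K(A, d)`: the `K`-type of `d` in `A`. -/
def ALCIKB.tp (K : ALCIKB) (A : Str) (d : A.Dom) : Set Concept :=
  {C | C ∈ K.cl ∧ d ∈ C.interp A}

/-- `t` is a `K`-type: it is realized in some model of `K`. -/
def ALCIKB.IsType (K : ALCIKB) (t : Set Concept) : Prop :=
  ∃ A : Str, A.IsModel K.toKB ∧ ∃ d : A.Dom, K.tp A d = t

/-- `t` is realizable in `K, b`. -/
def ALCIKB.RealizableAt (K : ALCIKB) (b : ℕ) (t : Set Concept) : Prop :=
  ∃ A : Str, A.IsModel K.toKB ∧ K.tp A (A.const b) = t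

/-- A type is connected if it contains `∃R.⊤` for some role `R`. -/
def TypeConnected (t : Set Concept) : Prop :=
  ∃ i R, Concept.exRole i R Concept.top ∈ t

/-- `ρ = (inv, R)` is a role (a role name or its inverse); `roleHolds A ρ d e`
says that `(d, e)` is in the extension of the role. -/
def roleHolds (A : Str) (ρ : Bool × ℕ) (d e : A.Dom) : Prop :=
  if ρ.1 then A.rel 2 ρ.2 ![e, d] else A.rel 2 ρ.2 ![d, e]

/-- `S` is a Σ-bisimulation (for ALCI) between `A` and `B`. -/
structure IsALCIBisim (sg : Set (ℕ × ℕ)) (A B : Str) (S : Set (A.Dom × B.Dom)) : Prop where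
  atom : ∀ p ∈ S, ∀ c : ℕ, (1, c) ∈ sg → (A.rel 1 c ![p.1] ↔ B.rel 1 c ![p.2])
  forth : ∀ p ∈ S, ∀ ρ : Bool × ℕ, (2, ρ.2) ∈ sg →
    ∀ d' : A.Dom, roleHolds A ρ p.1 d' → ∃ e' : B.Dom, roleHolds B ρ p.2 e' ∧ (d', e') ∈ S
  back : ∀ p ∈ S, ∀ ρ : Bool × ℕ, (2, ρ.2) ∈ sg →
    ∀ e' : B.Dom, roleHolds B ρ p.2 e' → ∃ d' : A.Dom, roleHolds A ρ p.1 d' ∧ (d', e') ∈ S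

/-- `A,d ∼_{ALCI,Σ} B,e`. -/
def ALCIBisimilar (sg : Set (ℕ × ℕ)) (A : Str) (d : A.Dom) (B : Str) (e : B.Dom) : Prop :=
  ∃ S : Set (A.Dom × B.Dom), IsALCIBisim sg A B S ∧ (d, e) ∈ S

/-- A `K`-type `t` is ALCI-complete. -/
def ALCIKB.TypeComplete (K : ALCIKB) (t : Set Concept) : Prop :=
  ∀ A B : Str, A.IsModel K.toKB → B.IsModel K.toKB → ∀ (d : A.Dom) (e : B.Dom),
    K.tp A d = t → K.tp B e = t → ALCIBisimilar K.sigK A d B e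

/-- `(K,P,N)` is strongly incomplete: no connected `K`-type realizable at some
negative example is ALCI-complete. -/
def ALCIKB.StronglyIncomplete (K : ALCIKB) (N : Set ℕ) : Prop :=
  ∀ t : Set Concept, TypeConnected t → (∃ b ∈ N, K.RealizableAt b t) → ¬ K.TypeComplete t

/-- `t₁ ⇝_ρ t₂`: the types are `ρ`-coherent. -/
def ALCIKB.Coherent (K : ALCIKB) (t₁ t₂ : Set Concept) (ρ : Bool × ℕ) : Prop :=
  ∃ A : Str, A.IsModel K.toKB ∧ ∃ d e : A.Dom, K.tp A d = t₁ ∧ K.tp A e = t₂ ∧ roleHolds A ρ d e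

/-- The sequence `t₀ ρ₀ … ρ_n t_{n+1}` witnesses ALCI-incompleteness of the type `t`. -/
def ALCIKB.WitSeq (K : ALCIKB) (t : Set Concept) (n : ℕ)
    (ts : Fin (n + 2) → Set Concept) (ρs : Fin (n + 1) → Bool × ℕ) : Prop :=
  1 ≤ n ∧
  ts 0 = t ∧
  (∀ i : Fin (n + 2), K.IsType (ts i)) ∧
  (∀ i : Fin (n + 1), ((2 : ℕ), (ρs i).2) ∈ K.sigK) ∧
  (∀ i : Fin (n + 1), K.Coherent (ts i.castSucc) (ts i.succ) (ρs i)) ∧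
  ∃ A : Str, A.IsModel K.toKB ∧ ∃ d e : A.Dom,
    roleHolds A (ρs ⟨n - 1, by omega⟩) d e ∧
    K.tp A d = ts ⟨n - 1, by omega⟩ ∧ K.tp A e = ts ⟨n, by omega⟩ ∧
    ¬ ∃ f : A.Dom, K.tp A f = ts ⟨n + 1, by omega⟩ ∧ roleHolds A (ρs ⟨n, by omega⟩) e f

/-! ### Weak and strong separability by ALCI concepts -/

/-- A concept `C` (weakly) separates `(K, P, N)`. -/
def ALCIKB.SeparatesC (K : ALCIKB) (P N : Set ℕ) (C : Concept) : Prop :=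
  (∀ a ∈ P, ∀ A : Str, A.IsModel K.toKB → A.const a ∈ C.interp A) ∧
  ∀ b ∈ N, ¬ ∀ A : Str, A.IsModel K.toKB → A.const b ∈ C.interp A

/-- A concept `C` strongly separates `(K, P, N)`. -/
def ALCIKB.StronglySeparatesC (K : ALCIKB) (P N : Set ℕ) (C : Concept) : Prop :=
  (∀ a ∈ P, ∀ A : Str, A.IsModel K.toKB → A.const a ∈ C.interp A) ∧
  ∀ b ∈ N, ∀ A : Str, A.IsModel K.toKB → A.const b ∉ C.interp A

/-- Non-projective ALCI-separability of a labeled ALCI KB. -/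
def ALCIKB.CSeparable (K : ALCIKB) (P N : Set ℕ) : Prop :=
  ∃ C : Concept, C.csig ⊆ K.sigK ∧ K.SeparatesC P N C

/-- Projective ALCI-separability of a labeled ALCI KB. -/
def ALCIKB.CProjSeparable (K : ALCIKB) (P N : Set ℕ) : Prop :=
  ∃ C : Concept, K.SeparatesC P N C

/-- Non-projective strong ALCI-separability of a labeled ALCI KB. -/
def ALCIKB.CStronglySeparable (K : ALCIKB) (P N : Set ℕ) : Prop :=
  ∃ C : Concept, C.csig ⊆ K.sigK ∧ K.StronglySeparatesC P N C

/-! ### ALCI(Σ)-embeddings -/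

/-- An ALCI(Σ)-embedding of a (unary/binary) database into a structure. -/
def ALCIEmbed (sg : Set (ℕ × ℕ)) (D : Database) (A : Str) (S : Set (ℕ × A.Dom)) : Prop :=
  (∀ p ∈ S, ∀ c : ℕ, (⟨1, c, ![p.1]⟩ : Atom) ∈ D.atoms → A.rel 1 c ![p.2]) ∧
  (∀ p ∈ S, ∀ q ∈ S, p.1 = q.1 → ALCIBisimilar sg A p.2 A q.2) ∧
  (∀ p ∈ S, ∀ R a', (⟨2, R, ![p.1, a']⟩ : Atom) ∈ D.atoms →
      ∃ b' : A.Dom, A.rel 2 R ![p.2, b'] ∧ (a', b') ∈ S) ∧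
  (∀ p ∈ S, ∀ R a', (⟨2, R, ![a', p.1]⟩ : Atom) ∈ D.atoms →
      ∃ b' : A.Dom, A.rel 2 R ![b', p.2] ∧ (a', b') ∈ S)

/-- `D,a ≼_Σ A,d`: some ALCI(Σ)-embedding contains `(a, d)`. -/
def ALCIEmbeddable (sg : Set (ℕ × ℕ)) (D : Database) (a : ℕ) (A : Str) (d : A.Dom) : Prop :=
  ∃ S : Set (ℕ × A.Dom), ALCIEmbed sg D A S ∧ (a, d) ∈ S

/-! ### Forest models -/

/-- There is a role edge from `d` to `e` (in either direction). -/
def Str.RoleEdge (A : Str) (d e : A.Dom) : Prop :=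
  ∃ R, A.rel 2 R ![d, e] ∨ A.rel 2 R ![e, d]

/-- `(d, e)` is an edge induced by a binary database atom. -/
def Str.DbEdge (A : Str) (K : ALCIKB) (d e : A.Dom) : Prop :=
  ∃ R x y, (⟨2, R, ![x, y]⟩ : Atom) ∈ K.db.atoms ∧ d = A.const x ∧ e = A.const y

/-- A role edge that is not induced by the database. -/
def Str.TreeEdge (A : Str) (K : ALCIKB) (d e : A.Dom) : Prop :=
  A.RoleEdge d e ∧ ¬ A.DbEdge K d e ∧ ¬ A.DbEdge K e d

/-- The graph of tree edges. -/
def Str.forestGraph (A : Str) (K : ALCIKB) : SimpleGraph A.Dom where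
  Adj d e := d ≠ e ∧ A.TreeEdge K d e
  symm := ⟨by
    rintro d e ⟨hne, ⟨R, hR⟩, h1, h2⟩
    exact ⟨hne.symm, ⟨R, hR.symm⟩, h2, h1⟩⟩
  loopless := ⟨fun d h => h.1 rfl⟩

/-- `A` is a forest model of the ALCI KB `K`: a model that is the disjoint union
of tree-shaped structures, one rooted at each `c^A` for `c ∈ cons(D)`, extended
with the edges induced by the binary database atoms. -/
def Str.IsForestModel (A : Str) (K : ALCIKB) : Prop :=
  A.IsModel K.toKB ∧
  (∀ k R t, A.rel k R t → k = 1 ∨ k = 2) ∧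
  (∀ d : A.Dom, A.RoleEdge d d → A.DbEdge K d d) ∧
  (A.forestGraph K).IsAcyclic ∧
  (∀ d : A.Dom, ∃ c ∈ K.db.consts, (A.forestGraph K).Reachable (A.const c) d) ∧
  (∀ c ∈ K.db.consts, ∀ c' ∈ K.db.consts, A.const c ≠ A.const c' →
      ¬ (A.forestGraph K).Reachable (A.const c) (A.const c'))

/-- `A` has finite outdegree. -/
def Str.FiniteOutdegree (A : Str) : Prop :=
  ∀ d : A.Dom, {e : A.Dom | A.RoleEdge d e}.Finite

/-! ## Guarded bisimulations -/

/-- A set of domain elements is guarded in a structure. -/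
def Str.GuardedSet (A : Str) (G : Set A.Dom) : Prop :=
  (∃ d, G = {d}) ∨ ∃ k R, ∃ t : Fin k → A.Dom, A.rel k R t ∧ G = Set.range t

/-- A tuple is guarded in a structure. -/
def Str.GuardedTuple (A : Str) {k : ℕ} (t : Fin k → A.Dom) : Prop :=
  ∃ G, A.GuardedSet G ∧ Set.range t ⊆ G

/-- `a⃗ ↦ b⃗` is a partial Σ-isomorphism. -/
def PartialIso (sg : Set (ℕ × ℕ)) (A B : Str) {k : ℕ}
    (a : Fin k → A.Dom) (b : Fin k → B.Dom) : Prop :=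
  (∀ i j, a i = a j ↔ b i = b j) ∧
  ∀ m R, (m, R) ∈ sg → ∀ f : Fin m → Fin k, (A.rel m R (a ∘ f) ↔ B.rel m R (b ∘ f))

/-- A pair of equally long tuples in two structures. -/
structure GPair (A B : Str) : Type where
  k : ℕ
  a : Fin k → A.Dom
  b : Fin k → B.Dom

/-- Forth condition; if `conn = true` it is only required for guarded tuples
overlapping the current one (connected guarded bisimulations). -/
def StepForth (conn : Bool) (A B : Str) (I : Set (GPair A B)) (p : GPair A B) : Prop :=
  ∀ (k' : ℕ) (a' : Fin k' → A.Dom), A.GuardedTuple a' →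
    (conn → (Set.range a' ∩ Set.range p.a).Nonempty) →
    ∃ b' : Fin k' → B.Dom, GPair.mk k' a' b' ∈ I ∧ ∀ i j, p.a i = a' j → p.b i = b' j

/-- Back condition. -/
def StepBack (conn : Bool) (A B : Str) (I : Set (GPair A B)) (p : GPair A B) : Prop :=
  ∀ (k' : ℕ) (b' : Fin k' → B.Dom), B.GuardedTuple b' →
    (conn → (Set.range b' ∩ Set.range p.b).Nonempty) →
    ∃ a' : Fin k' → A.Dom, GPair.mk k' a' b' ∈ I ∧ ∀ i j, p.b i = b' j → p.a i = a' j

/-- `I` is a (connected, if `conn`) guarded Σ-bisimulation between `A` and `B`. -/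
def IsGBisim (conn : Bool) (sg : Set (ℕ × ℕ)) (A B : Str) (I : Set (GPair A B)) : Prop :=
  ∀ p ∈ I, A.GuardedTuple p.a ∧ B.GuardedTuple p.b ∧ PartialIso sg A B p.a p.b ∧
    StepForth conn A B I p ∧ StepBack conn A B I p

/-- `A,a⃗ ∼_{GF,Σ} B,b⃗` (`conn = false`) resp. `A,a⃗ ∼_{openGF,Σ} B,b⃗` (`conn = true`). -/
def GBisimilar (conn : Bool) (sg : Set (ℕ × ℕ)) (A : Str) {n : ℕ} (a : Fin n → A.Dom)
    (B : Str) (b : Fin n → B.Dom) : Prop :=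
  ∃ I : Set (GPair A B), IsGBisim conn sg A B I ∧ PartialIso sg A B a b ∧
    StepForth conn A B I ⟨n, a, b⟩ ∧ StepBack conn A B I ⟨n, a, b⟩

/-- A sequence `I_ℓ, …, I₀` witnessing (connected) guarded Σ `ℓ`-bisimilarity. -/
def IsGBisimSeq (conn : Bool) (sg : Set (ℕ × ℕ)) (A B : Str)
    (Is : ℕ → Set (GPair A B)) (ℓ : ℕ) : Prop :=
  (∀ i, i < ℓ → ∀ p ∈ Is i, A.GuardedTuple p.a ∧ B.GuardedTuple p.b) ∧
  (∀ i, i ≤ ℓ → ∀ p ∈ Is i, PartialIso sg A B p.a p.b) ∧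
  ∀ i, i < ℓ → ∀ p ∈ Is (i + 1), StepForth conn A B (Is i) p ∧ StepBack conn A B (Is i) p

/-- `A,a⃗ ∼^ℓ_{GF,Σ} B,b⃗` (`conn = false`) resp. `A,a⃗ ∼^ℓ_{openGF,Σ} B,b⃗` (`conn = true`). -/
def GLBisimilar (conn : Bool) (sg : Set (ℕ × ℕ)) (A : Str) {n : ℕ} (a : Fin n → A.Dom)
    (B : Str) (b : Fin n → B.Dom) (ℓ : ℕ) : Prop :=
  ∃ Is : ℕ → Set (GPair A B), IsGBisimSeq conn sg A B Is ℓ ∧ GPair.mk n a b ∈ Is ℓ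

/-! ## Guarded Σ ℓ-embeddings -/

/-- A pair of tuples: constants of a database and elements of a structure. -/
structure EPair (A : Str) : Type where
  k : ℕ
  c : Fin k → ℕ
  f : Fin k → A.Dom

/-- `p` is a partial embedding (injective partial homomorphism) from `D` into `A`. -/
def IsPartialEmbed (D : Database) (A : Str) (p : EPair A) : Prop :=
  (∀ i j, p.c i = p.c j ↔ p.f i = p.f j) ∧
  (∀ i, p.c i ∈ D.consts) ∧
  ∀ a ∈ D.atoms, ∀ g : Fin a.arity → Fin p.k, a.args = p.c ∘ g →
    A.rel a.arity a.rel (p.f ∘ g)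

/-- Guarded sets of a database. -/
def Database.GuardedSet (D : Database) (G : Set ℕ) : Prop :=
  (∃ c ∈ D.consts, G = {c}) ∨ ∃ a ∈ D.atoms, G = Set.range a.args

/-- `e` is a homomorphism from `D` onto `D'`. -/
def DbHomOnto (e : ℕ → ℕ) (D D' : Database) : Prop :=
  (∀ a ∈ D.atoms, a.mapC e ∈ D'.atoms) ∧ ∀ a' ∈ D'.atoms, ∃ a ∈ D.atoms, a.mapC e = a'

/-- `D,t⃗ ≼^ℓ_{openGF,Σ} A,b⃗`: there is a guarded Σ `ℓ`-embedding `(e, H)`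
between the pointed database `(D, t⃗)` and the pointed structure `(A, b⃗)`. -/
def GLEmbed (sg : Set (ℕ × ℕ)) (D : Database) {n : ℕ} (t : Fin n → ℕ)
    (A : Str) (b : Fin n → A.Dom) (ℓ : ℕ) : Prop :=
  ∃ (D' : Database) (e : ℕ → ℕ) (H : Set (EPair A)),
    DbHomOnto e D D' ∧
    (∀ p ∈ H, IsPartialEmbed D' A p) ∧
    EPair.mk n (e ∘ t) b ∈ H ∧
    (∀ G : Set ℕ, D'.GuardedSet G → ∃ p ∈ H, Set.range p.c = G) ∧
    ∀ p₁ ∈ H, ∀ p₂ ∈ H,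
      ∃ (m : ℕ) (j₁ : Fin m → Fin p₁.k) (j₂ : Fin m → Fin p₂.k),
        p₁.c ∘ j₁ = p₂.c ∘ j₂ ∧
        Set.range (p₁.c ∘ j₁) = Set.range p₁.c ∩ Set.range p₂.c ∧
        PartialIso sg A A (p₁.f ∘ j₁) (p₂.f ∘ j₂) ∧
        ∀ (k' : ℕ) (g : Fin k' → Fin m),
          Set.range (p₁.f ∘ j₁ ∘ g) = Set.range (p₁.f ∘ j₁) →
          GLBisimilar true sg A (p₁.f ∘ j₁ ∘ g) A (p₂.f ∘ j₂ ∘ g) ℓ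

/-! ## Gaifman graph of a structure -/

/-- Adjacency in the Gaifman graph of a structure. -/
def Str.Adj (A : Str) (d e : A.Dom) : Prop :=
  ∃ k R, ∃ t : Fin k → A.Dom, A.rel k R t ∧ d ∈ Set.range t ∧ e ∈ Set.range t

/-- `WithinDist A m d e`: `e` is at distance at most `m` from `d` in the
Gaifman graph of `A`. -/
def WithinDist (A : Str) : ℕ → A.Dom → A.Dom → Prop
  | 0, d, e => d = e
  | m + 1, d, e => d = e ∨ ∃ c, A.Adj d c ∧ WithinDist A m c e

/-! ## K-types for GF-KBs -/

/-- `cl(K)` for a GF-KB: the formulas of the ontology, equalities between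
distinct variables, and for every `R ∈ sig(K)` of arity `k` the formulas
`R(x⃗_k)`, `∃y⃗₁(R(x⃗_k) ∧ ¬ x_u = x_w)` and `∃y⃗₂ R(x⃗_k)` (`[y⃗₂] ⊆ [x⃗_k]∖{x_u,x_w}`),
closed under subformulas and single negation. -/
def KB.clGFbase (K : KB) : Set Fml :=
  K.onto ∪
  {φ | ∃ x y : ℕ, x ≠ y ∧ φ = Fml.eq x y} ∪
  {φ | ∃ k R, (k, R) ∈ K.sig ∧
    (φ = baseAtom k R ∨
     (∃ u w : ℕ, u < k ∧ w < k ∧ u ≠ w ∧ φ = connFml k R u w) ∨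
     ∃ u w : ℕ, u < k ∧ w < k ∧ u ≠ w ∧
       ∃ ys : List ℕ, (∀ z ∈ ys, z < k ∧ z ≠ u ∧ z ≠ w) ∧ φ = exList ys (baseAtom k R))}

def KB.clGF (K : KB) : Set Fml :=
  (⋃ φ ∈ K.clGFbase, φ.subfmls) ∪ Fml.neg '' (⋃ φ ∈ K.clGFbase, φ.subfmls)

/-- `tp_K(A, b⃗)`: the `K`-type of the tuple `b⃗` in `A`, represented as the set
of pairs `(φ, σ)` with `φ ∈ cl(K)` and `σ` a substitution of the variables of
`φ` by positions of `b⃗` making `φ` true at `b⃗`. -/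
def KB.tpGF (K : KB) (A : Str) {m : ℕ} (b : Fin m → A.Dom) : Set (Fml × (ℕ → Fin m)) :=
  {p | p.1 ∈ K.clGF ∧ p.1.Sat A fun x => b (p.2 x)}

/-- `Φ` is a `K`-type (of tuples of length `m`). -/
def KB.IsGFTypeAt (K : KB) {m : ℕ} (Φ : Set (Fml × (ℕ → Fin m))) : Prop :=
  ∃ A : Str, A.IsModel K ∧ ∃ b : Fin m → A.Dom, K.tpGF A b = Φ

/-- `Φ` is realizable in `K, t⃗`. -/
def KB.GFRealizableAt (K : KB) {m : ℕ} (t : Fin m → ℕ) (Φ : Set (Fml × (ℕ → Fin m))) : Prop :=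
  ∃ A : Str, A.IsModel K ∧ K.tpGF A (fun i => A.const (t i)) = Φ

/-- The tuple `w⃗` satisfies all (substituted) formulas of `Φ` in `A`. -/
def TypeSat (A : Str) {m : ℕ} (w : Fin m → A.Dom) (Φ : Set (Fml × (ℕ → Fin m))) : Prop :=
  ∀ p ∈ Φ, p.1.Sat A fun x => w (p.2 x)

/-- A `K`-type `Φ(x⃗)` is connected: it contains a formula `∃y⃗₁(R(x⃗) ∧ x_u ≠ x_w)`. -/
def GFTypeConnected {m : ℕ} (Φ : Set (Fml × (ℕ → Fin m))) : Prop :=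
  ∃ k R u w, ∃ σ : ℕ → Fin m, u < k ∧ w < k ∧ u ≠ w ∧ (connFml k R u w, σ) ∈ Φ

/-- A `K`-type `Φ(x⃗)` is guarded: it contains the atom `R(x⃗)` (on the full tuple). -/
def GFTypeGuarded {m : ℕ} (Φ : Set (Fml × (ℕ → Fin m))) : Prop :=
  ∃ R, ∃ σ : ℕ → Fin m, (∀ i : Fin m, σ i.1 = i) ∧ (baseAtom m R, σ) ∈ Φ

/-- A `K`-type is non-unary: it contains `¬ (x = y)` for (substituted-)distinct variables. -/
def GFTypeNonUnary {m : ℕ} (Φ : Set (Fml × (ℕ → Fin m))) : Prop :=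
  ∃ x y, ∃ σ : ℕ → Fin m, σ x ≠ σ y ∧ (Fml.neg (.eq x y), σ) ∈ Φ

/-- The restriction of a type `Φ(x⃗)` to the single variable `x_j`. -/
def GFRestrict1 {m : ℕ} (Φ : Set (Fml × (ℕ → Fin m))) (j : Fin m) :
    Set (Fml × (ℕ → Fin 1)) :=
  {q | ∃ σ : ℕ → Fin m, (q.1, σ) ∈ Φ ∧ ∀ x ∈ q.1.free, σ x = j}

/-- A `K`-type is openGF-complete: any two pointed models of `K` realizing it
are connected guarded `sig(K)`-bisimilar. -/
def KB.OpenGFComplete (K : KB) {m : ℕ} (Φ : Set (Fml × (ℕ → Fin m))) : Prop :=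
  ∀ A B : Str, A.IsModel K → B.IsModel K → ∀ (a : Fin m → A.Dom) (b : Fin m → B.Dom),
    K.tpGF A a = Φ → K.tpGF B b = Φ → GBisimilar true K.sig A a B b

/-! ## K-types with explicit variable tuples, and witness sequences -/

/-- A `K`-type together with an explicit tuple of distinct variables. -/
structure GFTypeV : Type where
  m : ℕ
  xs : Fin m → ℕ
  xs_inj : Function.Injective xs
  Phi : Set (Fml × (ℕ → Fin m))

/-- The type `T` is satisfied under the assignment `μ` of its variables. -/
def GFTypeV.SatUnder (T : GFTypeV) (A : Str) (μ : ℕ → A.Dom) : Prop :=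
  ∀ p ∈ T.Phi, p.1.Sat A fun x => μ (T.xs (p.2 x))

/-- `T` is a `K`-type. -/
def GFTypeV.IsTypeOf (T : GFTypeV) (K : KB) : Prop := K.IsGFTypeAt T.Phi

/-- Two types (with explicit variables) are coherent: some model of `K`
satisfies their union under a common assignment. -/
def GFCoherent (K : KB) (T₁ T₂ : GFTypeV) : Prop :=
  ∃ A : Str, A.IsModel K ∧ ∃ μ : ℕ → A.Dom, T₁.SatUnder A μ ∧ T₂.SatUnder A μ

/-- The sequence `Φ₀(x⃗₀),…,Φ_{n+1}(x⃗_{n+1})` witnesses openGF-incompleteness of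
the `K`-type `Φ(x)` with one free variable. -/
def GFWitSeq (K : KB) (Φ : Set (Fml × (ℕ → Fin 1))) (n : ℕ)
    (Ts : Fin (n + 2) → GFTypeV) : Prop :=
  (∃ j : Fin (Ts 0).m, GFRestrict1 (Ts 0).Phi j = Φ) ∧
  (∀ i : Fin (n + 2), (Ts i).IsTypeOf K ∧ GFTypeGuarded (Ts i).Phi ∧ GFTypeNonUnary (Ts i).Phi) ∧
  (∀ i : Fin (n + 1),
    (Set.range (Ts i.castSucc).xs ∩ Set.range (Ts i.succ).xs).Nonempty) ∧
  (∀ i : Fin (n + 1), GFCoherent K (Ts i.castSucc) (Ts i.succ)) ∧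
  ∃ A : Str, A.IsModel K ∧ ∃ μ : ℕ → A.Dom,
    (Ts ⟨n, by omega⟩).SatUnder A μ ∧
    ¬ ∃ μ' : ℕ → A.Dom,
        (∀ x, x ∈ Set.range (Ts ⟨n, by omega⟩).xs → x ∈ Set.range (Ts ⟨n + 1, by omega⟩).xs →
          μ' x = μ x) ∧
        (Ts ⟨n + 1, by omega⟩).SatUnder A μ'

/-! ## Relativization and finite controllability -/

/-- `L` has the relativization property. -/
def RelativizationProperty (L : Set Fml) : Prop :=
  ∀ φ ∈ L, φ.free = ∅ → ∀ c : ℕ, ((1 : ℕ), c) ∉ φ.sig →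
    ∃ φ' ∈ L, φ'.free = ∅ ∧ ∀ (B : Str) (v : ℕ → B.Dom),
      (φ'.Sat B v ↔ φ.SatIn B {d | B.rel 1 c ![d]} v)

/-- Evaluating queries from `Q` is finitely controllable on `L`-KBs. -/
def FinitelyControllable (Q L : Set Fml) : Prop :=
  ∀ K : KB, (∀ φ ∈ K.onto, φ ∈ L) → (∀ φ ∈ K.onto, φ.free = ∅) →
  ∀ (n : ℕ) (q : Fml), q ∈ Q → (∀ m ∈ q.free, m < n) →
  ∀ c : Fin n → ℕ,
  (∃ A : Str, A.IsModel K ∧ ∃ v : ℕ → A.Dom,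
      (∀ i : Fin n, v i.1 = A.const (c i)) ∧ ¬ q.Sat A v) →
  ∃ A : Str, Finite A.Dom ∧ A.IsModel K ∧ ∃ v : ℕ → A.Dom,
      (∀ i : Fin n, v i.1 = A.const (c i)) ∧ ¬ q.Sat A v

section Helpers
open Fml

/-! ### Basic satisfaction / syntax lemmas for `exList`, `bigAnd`, `bigOr`. -/

private lemma sat_exList (A : Str) (φ : Fml) (ys : List ℕ) (v : ℕ → A.Dom) :
    (exList ys φ).Sat A v ↔ ∃ v' : ℕ → A.Dom, (∀ x, x ∉ ys → v' x = v x) ∧ φ.Sat A v' := by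
  induction ys generalizing v with
  | nil =>
    constructor
    · intro h; exact ⟨v, fun _ _ => rfl, h⟩
    · rintro ⟨v', hv', h⟩
      have : v' = v := funext fun x => hv' x List.not_mem_nil
      rwa [this] at h
  | cons y ys ih =>
    show (Fml.ex y (exList ys φ)).Sat A v ↔ _
    simp only [Fml.Sat]
    constructor
    · rintro ⟨d, hd⟩
      obtain ⟨v', hv', h⟩ := (ih _).mp hd
      refine ⟨v', fun x hx => ?_, h⟩
      have hxy : x ≠ y := fun h' => hx (h' ▸ (List.mem_cons_self : y ∈ y :: ys))
      rw [hv' x (fun h' => hx (List.mem_cons_of_mem _ h')), Function.update_of_ne hxy]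
    · rintro ⟨v', hv', h⟩
      refine ⟨v' y, (ih _).mpr ⟨v', fun x hx => ?_, h⟩⟩
      by_cases hxy : x = y
      · subst hxy; simp
      · rw [Function.update_of_ne hxy]
        exact hv' x (fun h' => (List.mem_cons.mp h').elim hxy hx)

private lemma free_exList (φ : Fml) (ys : List ℕ) :
    (exList ys φ).free = φ.free \ {y | y ∈ ys} := by
  induction ys with
  | nil => ext x; simp [exList]
  | cons y ys ih =>
    show (Fml.ex y (exList ys φ)).free = _
    rw [show (Fml.ex y (exList ys φ)).free = (exList ys φ).free \ {y} from rfl, ih]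
    ext x; simp only [Set.mem_diff, Set.mem_setOf_eq, Set.mem_singleton_iff, List.mem_cons]
    tauto

private lemma eqVars_exList (φ : Fml) (ys : List ℕ) : (exList ys φ).eqVars = φ.eqVars := by
  induction ys with
  | nil => rfl
  | cons y ys ih =>
    show (Fml.ex y (exList ys φ)).eqVars = _
    rw [show (Fml.ex y (exList ys φ)).eqVars = (exList ys φ).eqVars from rfl, ih]

private lemma sig_exList (φ : Fml) (ys : List ℕ) : (exList ys φ).sig = φ.sig := by
  induction ys with
  | nil => rfl
  | cons y ys ih =>
    show (Fml.ex y (exList ys φ)).sig = _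
    rw [show (Fml.ex y (exList ys φ)).sig = (exList ys φ).sig from rfl, ih]

private lemma sat_bigAnd (A : Str) (l : List Fml) (v : ℕ → A.Dom) :
    (bigAnd l).Sat A v ↔ ∀ φ ∈ l, φ.Sat A v := by
  induction l with
  | nil => simp [bigAnd, Fml.Sat]
  | cons φ rest ih =>
    cases rest with
    | nil => simp [bigAnd]
    | cons ψ rest' =>
      rw [show bigAnd (φ :: ψ :: rest') = Fml.and φ (bigAnd (ψ :: rest')) from rfl]
      simp only [Fml.Sat, ih]
      constructor
      · rintro ⟨h1, h2⟩ χ hχ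
        rcases List.mem_cons.mp hχ with rfl | h
        · exact h1
        · exact h2 χ h
      · intro h
        exact ⟨h φ (List.mem_cons_self), fun χ hχ => h χ (List.mem_cons_of_mem _ hχ)⟩

private lemma sat_bigOr (A : Str) (l : List Fml) (v : ℕ → A.Dom) :
    (bigOr l).Sat A v ↔ ∃ φ ∈ l, φ.Sat A v := by
  induction l with
  | nil => simp [bigOr, Fml.Sat]
  | cons φ rest ih =>
    cases rest with
    | nil => simp [bigOr]
    | cons ψ rest' =>
      rw [show bigOr (φ :: ψ :: rest') = Fml.or φ (bigOr (ψ :: rest')) from rfl]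
      simp only [Fml.Sat, ih]
      constructor
      · rintro (h | ⟨χ, hχ, h⟩)
        · exact ⟨φ, List.mem_cons_self, h⟩
        · exact ⟨χ, List.mem_cons_of_mem _ hχ, h⟩
      · rintro ⟨χ, hχ, h⟩
        rcases List.mem_cons.mp hχ with rfl | hm
        · exact Or.inl h
        · exact Or.inr ⟨χ, hm, h⟩

private lemma free_bigAnd (l : List Fml) (h : l ≠ []) :
    (bigAnd l).free = ⋃ φ ∈ l, φ.free := by
  induction l with
  | nil => exact absurd rfl h
  | cons φ rest ih =>
    cases rest with
    | nil => simp [bigAnd]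
    | cons ψ rest' =>
      rw [show bigAnd (φ :: ψ :: rest') = Fml.and φ (bigAnd (ψ :: rest')) from rfl,
        show (Fml.and φ (bigAnd (ψ :: rest'))).free = φ.free ∪ (bigAnd (ψ :: rest')).free from rfl,
        ih (by simp)]
      ext x; simp [List.mem_cons]

private lemma eqVars_bigAnd_subset {S : Set ℕ} (h0 : (0 : ℕ) ∈ S) (l : List Fml)
    (h : ∀ φ ∈ l, φ.eqVars ⊆ S) : (bigAnd l).eqVars ⊆ S := by
  induction l with
  | nil =>
    intro x hx
    have : x = 0 := by simpa [bigAnd, Fml.eqVars] using hx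
    simpa [this]
  | cons φ rest ih =>
    cases rest with
    | nil => exact h φ (by simp)
    | cons ψ rest' =>
      rw [show bigAnd (φ :: ψ :: rest') = Fml.and φ (bigAnd (ψ :: rest')) from rfl]
      exact Set.union_subset (h φ (by simp))
        (ih fun χ hχ => h χ (List.mem_cons_of_mem _ hχ))

private lemma sig_bigAnd_subset {S : Set (ℕ × ℕ)} (l : List Fml)
    (h : ∀ φ ∈ l, φ.sig ⊆ S) : (bigAnd l).sig ⊆ S := by
  induction l with
  | nil => intro x hx; exact absurd hx (by simp [bigAnd, Fml.sig])
  | cons φ rest ih =>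
    cases rest with
    | nil => exact h φ (by simp)
    | cons ψ rest' =>
      rw [show bigAnd (φ :: ψ :: rest') = Fml.and φ (bigAnd (ψ :: rest')) from rfl]
      exact Set.union_subset (h φ (by simp))
        (ih fun χ hχ => h χ (List.mem_cons_of_mem _ hχ))

private lemma sig_bigOr_subset {S : Set (ℕ × ℕ)} (l : List Fml)
    (h : ∀ φ ∈ l, φ.sig ⊆ S) : (bigOr l).sig ⊆ S := by
  induction l with
  | nil => intro x hx; exact absurd hx (by simp [bigOr, Fml.sig])
  | cons φ rest ih =>
    cases rest with
    | nil => exact h φ (by simp)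
    | cons ψ rest' =>
      rw [show bigOr (φ :: ψ :: rest') = Fml.or φ (bigOr (ψ :: rest')) from rfl]
      exact Set.union_subset (h φ (by simp))
        (ih fun χ hχ => h χ (List.mem_cons_of_mem _ hχ))

private lemma isQFConj_bigAnd (l : List Fml) (h : ∀ φ ∈ l, IsAtomic φ) :
    IsQFConj (bigAnd l) := by
  induction l with
  | nil => exact IsQFConj.atom (IsAtomic.eq 0 0)
  | cons φ rest ih =>
    cases rest with
    | nil => exact IsQFConj.atom (h φ (by simp))
    | cons ψ rest' =>
      exact IsQFConj.and (IsQFConj.atom (h φ (by simp)))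
        (ih fun χ hχ => h χ (List.mem_cons_of_mem _ hχ))

private lemma isCQ_exList (φ : Fml) (hφ : IsCQ φ) (ys : List ℕ)
    (h : ∀ y ∈ ys, y ∉ φ.eqVars) : IsCQ (exList ys φ) := by
  induction ys with
  | nil => exact hφ
  | cons y ys ih =>
    show IsCQ (Fml.ex y (exList ys φ))
    refine IsCQ.ex y (ih fun z hz => h z (List.mem_cons_of_mem _ hz)) ?_
    rw [eqVars_exList]
    exact h y (List.mem_cons_self)

private lemma bigOr_ucq {F : Set ℕ} (l : List Fml) (h : l ≠ [])
    (hcq : ∀ φ ∈ l, IsCQ φ) (hfree : ∀ φ ∈ l, φ.free = F) :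
    IsUCQ (bigOr l) ∧ (bigOr l).free = F := by
  induction l with
  | nil => exact absurd rfl h
  | cons φ rest ih =>
    cases rest with
    | nil => exact ⟨IsUCQ.cq (hcq φ (by simp)), hfree φ (by simp)⟩
    | cons ψ rest' =>
      obtain ⟨h1, h2⟩ := ih (by simp) (fun χ hχ => hcq χ (List.mem_cons_of_mem _ hχ))
          (fun χ hχ => hfree χ (List.mem_cons_of_mem _ hχ))
      have hφ := hfree φ (List.mem_cons_self)
      refine ⟨IsUCQ.or (IsUCQ.cq (hcq φ (List.mem_cons_self))) h1 (hφ.trans h2.symm), ?_⟩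
      rw [show bigOr (φ :: ψ :: rest') = Fml.or φ (bigOr (ψ :: rest')) from rfl,
        show (Fml.or φ (bigOr (ψ :: rest'))).free = φ.free ∪ (bigOr (ψ :: rest')).free from rfl,
        hφ, h2, Set.union_self]

/-! ### `varOf` -/

private lemma varOf_lt {n : ℕ} {t : Fin n → ℕ} {c : ℕ} (h : ∃ i : Fin n, t i = c) :
    ∃ hlt : varOf t c < n, t ⟨varOf t c, hlt⟩ = c := by
  rw [varOf, if_pos h]
  obtain ⟨i, hi⟩ := h
  have hne : i.1 ∈ {m : ℕ | ∃ h : m < n, t ⟨m, h⟩ = c} := ⟨i.2, hi⟩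
  exact Nat.sInf_mem (Set.nonempty_of_mem hne)

private lemma varOf_not {n : ℕ} {t : Fin n → ℕ} {c : ℕ} (h : ¬∃ i : Fin n, t i = c) :
    varOf t c = n + c := by
  rw [varOf, if_neg h]

/-! ### Changing the constants of a structure -/

private def reConst (A : Str) (c' : ℕ → A.Dom) : Str := ⟨A.Dom, A.dom_nonempty, A.rel, c'⟩

private lemma sat_reConst (A : Str) (c' : ℕ → A.Dom) (φ : Fml) :
    ∀ v : ℕ → A.Dom, φ.Sat (reConst A c') v ↔ φ.Sat A v := by
  induction φ with
  | eq x y => intro v; exact Iff.rfl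
  | rel k R w => intro v; exact Iff.rfl
  | neg φ ih => intro v; simp only [Fml.Sat]; rw [ih]
  | and φ ψ ih1 ih2 => intro v; simp only [Fml.Sat]; rw [ih1, ih2]
  | or φ ψ ih1 ih2 => intro v; simp only [Fml.Sat]; rw [ih1, ih2]
  | ex y φ ih => intro v; simp only [Fml.Sat]; exact exists_congr fun d => ih _
  | all y φ ih => intro v; simp only [Fml.Sat]; exact forall_congr' fun d => ih _

private lemma reconst_model (K : KB) (A : Str) (hA : A.IsModel K) {n : ℕ} (t : Fin n → ℕ)
    (h : ℕ → A.Dom) (hhom : DbHom (K.db.conRestrict t) A h)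
    (cst : ℕ → A.Dom)
    (hcst1 : ∀ c, (∃ c₀ ∈ Set.range t, Relation.ReflTransGen K.db.adj c₀ c) → cst c = h c)
    (hcst2 : ∀ c, ¬(∃ c₀ ∈ Set.range t, Relation.ReflTransGen K.db.adj c₀ c) → cst c = A.const c) :
    (reConst A cst).IsModel K := by
  constructor
  · intro ψ hψ w
    exact (sat_reConst A cst ψ w).mpr (hA.1 ψ hψ w)
  · intro a ha
    show A.rel a.arity a.rel fun i => cst (a.args i)
    by_cases hr : ∃ i₀ : Fin a.arity, ∃ c₀ ∈ Set.range t, Relation.ReflTransGen K.db.adj c₀ (a.args i₀)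
    · obtain ⟨i₀, c₀, hc₀, hrt⟩ := hr
      have hmem : a ∈ (K.db.conRestrict t).atoms := ⟨ha, c₀, hc₀, a.args i₀, ⟨i₀, rfl⟩, hrt⟩
      have hall : ∀ i, cst (a.args i) = h (a.args i) := fun i =>
        hcst1 _ ⟨c₀, hc₀, hrt.tail ⟨a, ha, ⟨i₀, rfl⟩, ⟨i, rfl⟩⟩⟩
      rw [show (fun i => cst (a.args i)) = fun i => h (a.args i) from funext hall]
      exact hhom a hmem
    · have hall : ∀ i, cst (a.args i) = A.const (a.args i) := fun i =>
        hcst2 _ (fun ⟨c₀, hc₀, hrt⟩ => hr ⟨i, c₀, hc₀, hrt⟩)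
      rw [show (fun i => cst (a.args i)) = fun i => A.const (a.args i) from funext hall]
      exact hA.2 a ha

/-! ### Properties of the canonical CQ -/

private lemma canonCQ_props (D' : Database) {n : ℕ} (hn : 0 < n) (t : Fin n → ℕ) :
    (canonCQ D' t).free = {m : ℕ | m < n} ∧ IsCQ (canonCQ D' t) ∧
    (canonCQ D' t).sig ⊆ D'.sig ∧
    ∀ (A : Str) (v : ℕ → A.Dom),
      ((canonCQ D' t).Sat A v ↔ ∃ h : ℕ → A.Dom, DbHom D' A h ∧ ∀ i : Fin n, h (t i) = v i.1) := by
  classical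
  set ys := ((D'.qvars_finite t).toFinset.toList.map fun c => n + c) with hys
  set L := ((D'.finite.toFinset.toList.map fun a =>
          Fml.rel a.arity a.rel fun i => varOf t (a.args i))
        ++
       ((List.finRange n ×ˢ List.finRange n).filterMap fun p =>
          if t p.1 = t p.2 then some (Fml.eq p.1.1 p.2.1) else none)) with hL
  have hcanon : canonCQ D' t = exList ys (bigAnd L) := rfl
  have hys_ge : ∀ x ∈ ys, n ≤ x := by
    intro x hx
    simp only [hys, List.mem_map] at hx
    obtain ⟨c, _, rfl⟩ := hx; omega
  have hys_mem : ∀ c, c ∈ D'.consts → c ∉ Set.range t → (n + c) ∈ ys := by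
    intro c hc hct
    simp only [hys, List.mem_map]
    exact ⟨c, by rw [Finset.mem_toList, Set.Finite.mem_toFinset]; exact ⟨hc, hct⟩, rfl⟩
  have hrel_mem : ∀ a ∈ D'.atoms,
      (Fml.rel a.arity a.rel fun i => varOf t (a.args i)) ∈ L := by
    intro a ha
    apply List.mem_append_left
    exact List.mem_map.mpr ⟨a, by rw [Finset.mem_toList, Set.Finite.mem_toFinset]; exact ha, rfl⟩
  have heq_mem : ∀ i j : Fin n, t i = t j → Fml.eq i.1 j.1 ∈ L := by
    intro i j hij
    apply List.mem_append_right
    refine List.mem_filterMap.mpr ⟨(i, j), ?_, by rw [if_pos hij]⟩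
    simp [List.mem_product]
  have hmem_cases : ∀ ψ ∈ L,
      (∃ a ∈ D'.atoms, ψ = Fml.rel a.arity a.rel fun i => varOf t (a.args i)) ∨
      ∃ i j : Fin n, t i = t j ∧ ψ = Fml.eq i.1 j.1 := by
    intro ψ hψ
    rcases List.mem_append.mp hψ with hm | hm
    · obtain ⟨a, ha, rfl⟩ := List.mem_map.mp hm
      exact Or.inl ⟨a, by rwa [Finset.mem_toList, Set.Finite.mem_toFinset] at ha, rfl⟩
    · obtain ⟨p, hp, hpe⟩ := List.mem_filterMap.mp hm
      right
      by_cases hc : t p.1 = t p.2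
      · rw [if_pos hc] at hpe
        exact ⟨p.1, p.2, hc, (Option.some_injective _ hpe).symm⟩
      · rw [if_neg hc] at hpe; cases hpe
  have hLne : L ≠ [] := by
    intro hnil
    have := heq_mem ⟨0, hn⟩ ⟨0, hn⟩ rfl
    rw [hnil] at this
    exact List.not_mem_nil this
  have hfree : (canonCQ D' t).free = {m : ℕ | m < n} := by
    rw [hcanon, free_exList, free_bigAnd L hLne]
    ext x
    simp only [Set.mem_diff, Set.mem_iUnion, Set.mem_setOf_eq, exists_prop]
    constructor
    · rintro ⟨⟨ψ, hψ, hx⟩, hnys⟩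
      rcases hmem_cases ψ hψ with ⟨a, ha, rfl⟩ | ⟨i, j, hij, rfl⟩
      · obtain ⟨i, rfl⟩ := hx
        by_cases hc : ∃ j : Fin n, t j = a.args i
        · exact (varOf_lt hc).1
        · exfalso
          have hnys' : varOf t (a.args i) ∉ ys := hnys
          rw [varOf_not hc] at hnys'
          exact hnys' (hys_mem _ (Set.mem_biUnion ha ⟨i, rfl⟩)
            (fun ⟨j, hj⟩ => hc ⟨j, hj⟩))
      · rcases hx with rfl | rfl
        · exact i.2
        · exact j.2
    · intro hx
      refine ⟨⟨Fml.eq x x, heq_mem ⟨x, hx⟩ ⟨x, hx⟩ rfl, Or.inl rfl⟩, fun hmem => ?_⟩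
      have := hys_ge _ hmem; omega
  refine ⟨hfree, ?_, ?_, ?_⟩
  · -- IsCQ
    rw [hcanon]
    refine isCQ_exList _ (IsCQ.base (isQFConj_bigAnd L ?_)) ys ?_
    · intro ψ hψ
      rcases hmem_cases ψ hψ with ⟨a, _, rfl⟩ | ⟨i, j, _, rfl⟩
      · exact IsAtomic.rel _ _ _
      · exact IsAtomic.eq _ _
    · intro y hy hmem
      have hge := hys_ge y hy
      have hsub : (bigAnd L).eqVars ⊆ {m : ℕ | m < n} := by
        refine eqVars_bigAnd_subset (show (0:ℕ) ∈ {m : ℕ | m < n} from hn) L ?_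
        intro ψ hψ
        rcases hmem_cases ψ hψ with ⟨a, _, rfl⟩ | ⟨i, j, _, rfl⟩
        · intro z hz; exact absurd hz (by simp [Fml.eqVars])
        · intro z hz
          rcases hz with rfl | rfl
          · exact i.2
          · exact j.2
      have := hsub hmem; simp only [Set.mem_setOf_eq] at this; omega
  · -- sig
    rw [hcanon, sig_exList]
    refine sig_bigAnd_subset L ?_
    intro ψ hψ
    rcases hmem_cases ψ hψ with ⟨a, ha, rfl⟩ | ⟨i, j, _, rfl⟩
    · intro p hp
      rcases hp with rfl
      exact ⟨a, ha, rfl⟩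
    · intro p hp; exact absurd hp (by simp [Fml.sig])
  · -- satisfaction
    intro A v
    rw [hcanon, sat_exList]
    constructor
    · rintro ⟨v', hv', hsat⟩
      rw [sat_bigAnd] at hsat
      refine ⟨fun c => v' (varOf t c), ?_, ?_⟩
      · intro a ha
        have := hsat _ (hrel_mem a ha)
        simpa [Fml.Sat, Atom.Holds] using this
      · intro i
        have hex : ∃ j : Fin n, t j = t i := ⟨i, rfl⟩
        obtain ⟨hlt, hj⟩ := varOf_lt hex
        have heq := hsat _ (heq_mem ⟨varOf t (t i), hlt⟩ i hj)
        simp only [Fml.Sat] at heq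
        have h2 : v' i.1 = v i.1 := hv' _ (fun hmem => by have := hys_ge _ hmem; omega)
        exact heq.trans h2
    · rintro ⟨h, hhom, hpt⟩
      refine ⟨fun x => if x ∈ ys then h (x - n) else v x, fun x hx => if_neg hx, ?_⟩
      rw [sat_bigAnd]
      intro ψ hψ
      rcases hmem_cases ψ hψ with ⟨a, ha, rfl⟩ | ⟨i, j, hij, rfl⟩
      · have harg : ∀ i, (if varOf t (a.args i) ∈ ys then h (varOf t (a.args i) - n)
            else v (varOf t (a.args i))) = h (a.args i) := by
          intro i
          by_cases hc : ∃ j : Fin n, t j = a.args i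
          · obtain ⟨hlt, hj⟩ := varOf_lt hc
            rw [if_neg (fun hmem => by have := hys_ge _ hmem; omega)]
            have := hpt ⟨varOf t (a.args i), hlt⟩
            rw [hj] at this
            exact this.symm
          · rw [varOf_not hc,
              if_pos (hys_mem _ (Set.mem_biUnion ha ⟨i, rfl⟩) (fun ⟨j, hj⟩ => hc ⟨j, hj⟩))]
            congr 1; omega
        have hH := hhom a ha
        unfold Atom.Holds at hH
        simp only [Fml.Sat]
        convert hH using 2
        exact harg _
      · simp only [Fml.Sat]
        rw [if_neg (fun hmem => by have := hys_ge _ hmem; omega),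
          if_neg (fun hmem => by have := hys_ge _ hmem; omega)]
        rw [← hpt i, ← hpt j, hij]

/-! ### Properties of the canonical UCQ -/

private lemma canonUCQ_props (K : KB) {n : ℕ} (hn : 0 < n) (P : Set (Fin n → ℕ))
    (hP : P.Finite) (hPne : P.Nonempty) :
    IsUCQ (canonUCQ K P hP) ∧ (canonUCQ K P hP).free = {m : ℕ | m < n} ∧
    (canonUCQ K P hP).sig ⊆ K.sig ∧
    (∀ t ∈ P, K.entails (canonUCQ K P hP) t) ∧
    ∀ (A : Str) (v : ℕ → A.Dom), (canonUCQ K P hP).Sat A v →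
      ∃ t ∈ P, ∃ h : ℕ → A.Dom, DbHom (K.db.conRestrict t) A h ∧
        ∀ i : Fin n, h (t i) = v i.1 := by
  set lq := (hP.toFinset.toList.map fun t => canonCQ (K.db.conRestrict t) t) with hlq
  have hcanon : canonUCQ K P hP = bigOr lq := rfl
  have hmem : ∀ ψ, ψ ∈ lq ↔ ∃ t ∈ P, ψ = canonCQ (K.db.conRestrict t) t := by
    intro ψ
    simp only [hlq, List.mem_map, Finset.mem_toList, Set.Finite.mem_toFinset]
    constructor
    · rintro ⟨t, ht, rfl⟩; exact ⟨t, ht, rfl⟩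
    · rintro ⟨t, ht, rfl⟩; exact ⟨t, ht, rfl⟩
  have hlqne : lq ≠ [] := by
    obtain ⟨t, ht⟩ := hPne
    intro hnil
    have : canonCQ (K.db.conRestrict t) t ∈ lq := (hmem _).mpr ⟨t, ht, rfl⟩
    rw [hnil] at this
    exact List.not_mem_nil this
  obtain ⟨hucq, hfree⟩ := bigOr_ucq (F := {m : ℕ | m < n}) lq hlqne
    (by
      intro ψ hψ
      obtain ⟨t, _, rfl⟩ := (hmem ψ).mp hψ
      exact (canonCQ_props _ hn t).2.1)
    (by
      intro ψ hψ
      obtain ⟨t, _, rfl⟩ := (hmem ψ).mp hψ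
      exact (canonCQ_props _ hn t).1)
  refine ⟨hucq, hfree, ?_, ?_, ?_⟩
  · rw [hcanon]
    refine sig_bigOr_subset lq ?_
    intro ψ hψ
    obtain ⟨t, _, rfl⟩ := (hmem ψ).mp hψ
    refine ((canonCQ_props _ hn t).2.2.1).trans ?_
    intro p hp
    obtain ⟨a, ha, rfl⟩ := hp
    exact Set.mem_union_right _ ⟨a, ha.1, rfl⟩
  · intro t ht A hA v hv
    rw [hcanon, sat_bigOr]
    refine ⟨canonCQ (K.db.conRestrict t) t, (hmem _).mpr ⟨t, ht, rfl⟩, ?_⟩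
    rw [(canonCQ_props _ hn t).2.2.2 A v]
    exact ⟨A.const, fun a ha => hA.2 a ha.1, fun i => (hv i).symm⟩
  · intro A v hsat
    rw [hcanon, sat_bigOr] at hsat
    obtain ⟨ψ, hψ, hs⟩ := hsat
    obtain ⟨t, ht, rfl⟩ := (hmem ψ).mp hψ
    obtain ⟨h, hh⟩ := ((canonCQ_props _ hn t).2.2.2 A v).mp hs
    exact ⟨t, ht, h, hh⟩

/-! ### The transfer lemma -/

private lemma transfer (K : KB) {n : ℕ} (hn : 0 < n) {P : Set (Fin n → ℕ)}
    (hP : P.Finite) (hPne : P.Nonempty) (φ : Fml) (hpos : ∀ a ∈ P, K.entails φ a)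
    {b : Fin n → ℕ} (hq : K.entails (canonUCQ K P hP) b) : K.entails φ b := by
  classical
  intro A hA v hv
  obtain ⟨t, ht, h, hhom, hpt⟩ :=
    (canonUCQ_props K hn P hP hPne).2.2.2.2 A v (hq A hA v hv)
  set cst : ℕ → A.Dom := fun c =>
    if (∃ c₀ ∈ Set.range t, Relation.ReflTransGen K.db.adj c₀ c) then h c else A.const c
    with hcst
  have hB : (reConst A cst).IsModel K :=
    reconst_model K A hA t h hhom cst (fun c hc => if_pos hc) (fun c hc => if_neg hc)
  have hv' : ∀ i : Fin n, v i.1 = (reConst A cst).const (t i) := by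
    intro i
    show v i.1 = cst (t i)
    rw [show cst (t i) = h (t i) from if_pos ⟨t i, ⟨i, rfl⟩, Relation.ReflTransGen.refl⟩,
      hpt i]
  exact (sat_reConst A cst φ v).mp (hpos t ht (reConst A cst) hB v hv')

private lemma P_fin {n : ℕ} (K : KB) (P : Set (Fin n → ℕ))
    (h : ∀ t ∈ P, ∀ i, t i ∈ K.db.consts) : P.Finite :=
  (Set.Finite.pi fun _ : Fin n => K.db.consts_finite).subset
    (fun t ht i _ => h t ht i)

end Helpers
/-- for fragments containing all UCQs, projective and
non-projective (FO,L_S)-separability coincide, and all such separation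
languages have the same separating power on labeled FO-KBs. -/
theorem statement_1 :
    (∀ LS : Set Fml, IsFragment LS → UCQs ⊆ LS →
      ∀ (n : ℕ) (K : KB), (∀ φ ∈ K.onto, φ.free = ∅) →
      ∀ P N : Set (Fin n → ℕ), P.Nonempty → N.Nonempty →
        (∀ t ∈ P, ∀ i : Fin n, t i ∈ K.db.consts) →
        (∀ t ∈ N, ∀ i : Fin n, t i ∈ K.db.consts) →
        (ProjSeparable LS K P N ↔ NonProjSeparable LS K P N)) ∧
    (∀ LS LS' : Set Fml, IsFragment LS → UCQs ⊆ LS → IsFragment LS' → UCQs ⊆ LS' →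
      ∀ (n : ℕ) (K : KB), (∀ φ ∈ K.onto, φ.free = ∅) →
      ∀ P N : Set (Fin n → ℕ), P.Nonempty → N.Nonempty →
        (∀ t ∈ P, ∀ i : Fin n, t i ∈ K.db.consts) →
        (∀ t ∈ N, ∀ i : Fin n, t i ∈ K.db.consts) →
        (NonProjSeparable LS K P N ↔ NonProjSeparable LS' K P N)) := by
  have key : ∀ LS : Set Fml, UCQs ⊆ LS →
      ∀ (n : ℕ) (K : KB), ∀ P N : Set (Fin n → ℕ), P.Nonempty → N.Nonempty →
        (∀ t ∈ P, ∀ i : Fin n, t i ∈ K.db.consts) →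
        (∃ φ : Fml, Separates K P N φ) → NonProjSeparable LS K P N := by
    intro LS hLS n K P N hPne hNne hPc hex
    obtain ⟨φ, hsep⟩ := hex
    rcases Nat.eq_zero_or_pos n with rfl | hn
    · exfalso
      obtain ⟨a, ha⟩ := hPne
      obtain ⟨b, hb⟩ := hNne
      have hab : b = a := funext fun i => i.elim0
      exact (hab ▸ hsep.2.2 b hb) (hsep.2.1 a ha)
    · have hP := P_fin K P hPc
      obtain ⟨hucq, hfree, hsig, hpos, _⟩ := canonUCQ_props K hn P hP hPne
      refine ⟨canonUCQ K P hP, hLS hucq, hsig,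
        fun m hm => by rw [hfree] at hm; exact hm, hpos, ?_⟩
      intro b hb hq
      exact hsep.2.2 b hb (transfer K hn hP hPne φ hsep.2.1 hq)
  constructor
  · intro LS _ hLS n K _ P N hPne hNne hPc hNc
    constructor
    · rintro ⟨φ, _, hsep⟩
      exact key LS hLS n K P N hPne hNne hPc ⟨φ, hsep⟩
    · rintro ⟨φ, hL, _, hsep⟩
      exact ⟨φ, hL, hsep⟩
  · intro LS LS' _ hLS _ hLS' n K _ P N hPne hNne hPc hNc
    constructor
    · rintro ⟨φ, _, _, hsep⟩
      exact key LS' hLS' n K P N hPne hNne hPc ⟨φ, hsep⟩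
    · rintro ⟨φ, _, _, hsep⟩
      exact key LS hLS n K P N hPne hNne hPc ⟨φ, hsep⟩

end Sep
end

section
/- For every labeled ALCI-KB (K,P,N) (so positive and negative examples are single constants), the following conditions are equivalent: (1) (K,P,N) is strongly ALCI-separable; (2) (K,P,N) is strongly FO-separable; (3) for all a ∈ P and b ∈ N there do not exist models A and B of K such that a^A and b^B realize the same K-type; (4) the ALCI-concept t₁ ⊔ ⋯ ⊔ t_n strongly separates (K,P,N), where t₁,…,t_n are the K-types realizable in K,a for some a ∈ P, each type identified with the conjunction of the concepts it contains. -/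
namespace Sep

/-! ### Auxiliary lemmas for statement_4 -/

section Aux

open Concept

lemma mem_subconcepts_self (C : Concept) : C ∈ C.subconcepts := by
  cases C <;> simp [Concept.subconcepts]

lemma subconcepts_trans : ∀ (C D : Concept), D ∈ C.subconcepts → D.subconcepts ⊆ C.subconcepts := by
  intro C
  induction C with
  | top =>
      intro D hD; simp only [Concept.subconcepts, Set.mem_singleton_iff] at hD
      subst hD; exact subset_rfl
  | atom c =>
      intro D hD; simp only [Concept.subconcepts, Set.mem_singleton_iff] at hD
      subst hD; exact subset_rfl
  | neg C ih =>
      intro D hD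
      simp only [Concept.subconcepts, Set.mem_insert_iff] at hD
      rcases hD with rfl | hD
      · exact subset_rfl
      · exact (ih D hD).trans (Set.subset_insert _ _)
  | inter C1 C2 ih1 ih2 =>
      intro D hD
      simp only [Concept.subconcepts, Set.mem_insert_iff, Set.mem_union] at hD
      rcases hD with rfl | hD | hD
      · exact subset_rfl
      · exact ((ih1 D hD).trans Set.subset_union_left).trans (Set.subset_insert _ _)
      · exact ((ih2 D hD).trans Set.subset_union_right).trans (Set.subset_insert _ _)
  | exRole i R C ih =>
      intro D hD
      simp only [Concept.subconcepts, Set.mem_insert_iff] at hD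
      rcases hD with rfl | hD
      · exact subset_rfl
      · exact (ih D hD).trans (Set.subset_insert _ _)

/-- The "positive part" of `cl`. -/
def clX (K : ALCIKB) : Set Concept :=
  (⋃ p ∈ K.onto, p.1.subconcepts ∪ p.2.subconcepts) ∪
     (⋃ C ∈ {C : Concept | ∃ a ∈ K.db.atoms, a.arity = 1 ∧ C = Concept.atom a.rel}, C.subconcepts) ∪
     (⋃ C ∈ {C : Concept | ∃ R i, ((2 : ℕ), R) ∈ K.sigK ∧ C = Concept.exRole i R Concept.top},
        C.subconcepts)

lemma cl_eq (K : ALCIKB) : K.cl = clX K ∪ Concept.neg '' clX K := rfl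

lemma clX_subclosed (K : ALCIKB) {C : Concept} (hC : C ∈ clX K) : C.subconcepts ⊆ clX K := by
  rcases hC with (h | h) | h
  · obtain ⟨p, hp, hsub⟩ := Set.mem_iUnion₂.mp h
    intro D hD
    refine Set.mem_union_left _ (Set.mem_union_left _ (Set.mem_iUnion₂.mpr ⟨p, hp, ?_⟩))
    rcases hsub with h1 | h1
    · exact Set.mem_union_left _ (subconcepts_trans _ _ h1 hD)
    · exact Set.mem_union_right _ (subconcepts_trans _ _ h1 hD)
  · obtain ⟨C0, hC0, hsub⟩ := Set.mem_iUnion₂.mp h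
    intro D hD
    exact Set.mem_union_left _ (Set.mem_union_right _
      (Set.mem_iUnion₂.mpr ⟨C0, hC0, subconcepts_trans _ _ hsub hD⟩))
  · obtain ⟨C0, hC0, hsub⟩ := Set.mem_iUnion₂.mp h
    intro D hD
    exact Set.mem_union_right _
      (Set.mem_iUnion₂.mpr ⟨C0, hC0, subconcepts_trans _ _ hsub hD⟩)

lemma cl_subclosed (K : ALCIKB) {C D : Concept} (hC : C ∈ K.cl) (hD : D ∈ C.subconcepts) :
    D ∈ K.cl := by
  rw [cl_eq] at hC ⊢
  simp only [Set.mem_union, Set.mem_image] at hC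
  rcases hC with hC | ⟨C0, hC0, rfl⟩
  · exact Set.mem_union_left _ (clX_subclosed K hC hD)
  · simp only [Concept.subconcepts, Set.mem_insert_iff] at hD
    rcases hD with rfl | hD
    · exact Set.mem_union_right _ ⟨C0, hC0, rfl⟩
    · exact Set.mem_union_left _ (clX_subclosed K hC0 hD)

lemma cl_neg_closed (K : ALCIKB) :
    ∀ C ∈ K.cl, Concept.neg C ∈ K.cl ∨ ∃ C', C = Concept.neg C' ∧ C' ∈ K.cl := by
  intro C hC
  rw [cl_eq] at hC
  simp only [Set.mem_union, Set.mem_image] at hC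
  rcases hC with h | ⟨C', hC', rfl⟩
  · exact Or.inl (Set.mem_union_right _ ⟨C, h, rfl⟩)
  · exact Or.inr ⟨C', rfl, Set.mem_union_left _ hC'⟩

lemma onto_mem_cl (K : ALCIKB) {p : Concept × Concept} (hp : p ∈ K.onto) :
    p.1 ∈ K.cl ∧ p.2 ∈ K.cl := by
  rw [cl_eq]
  constructor
  · exact Set.mem_union_left _ (Set.mem_union_left _ (Set.mem_union_left _
      (Set.mem_iUnion₂.mpr ⟨p, hp, Set.mem_union_left _ (mem_subconcepts_self _)⟩)))
  · exact Set.mem_union_left _ (Set.mem_union_left _ (Set.mem_union_left _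
      (Set.mem_iUnion₂.mpr ⟨p, hp, Set.mem_union_right _ (mem_subconcepts_self _)⟩)))

/-! #### Semantics of the standard translation -/

lemma sat_toFml (A : Str) : ∀ (C : Concept) (x : ℕ), x ≤ 1 → ∀ v : ℕ → A.Dom,
    ((C.toFml x).Sat A v ↔ v x ∈ C.interp A) := by
  intro C
  induction C with
  | top => intro x hx v; simp [Concept.toFml, Fml.Sat, Concept.interp]
  | atom c =>
      intro x hx v
      simp only [Concept.toFml, Fml.Sat, Concept.interp, Set.mem_setOf_eq]
      have : (fun i => v (![x] i)) = ![v x] := by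
        funext i; fin_cases i <;> simp
      rw [this]
  | neg C ih =>
      intro x hx v
      simp only [Concept.toFml, Fml.Sat, Concept.interp, Set.mem_compl_iff, ih x hx v]
  | inter C D ihC ihD =>
      intro x hx v
      simp only [Concept.toFml, Fml.Sat, Concept.interp, Set.mem_inter_iff, ihC x hx v, ihD x hx v]
  | exRole inv R C ih =>
      intro x hx v
      have hne : x ≠ 1 - x := by omega
      simp only [Concept.toFml, Fml.Sat, Concept.interp, Set.mem_setOf_eq]
      constructor
      · rintro ⟨dd, h1, h2⟩
        have hdd : dd ∈ C.interp A := by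
          have := (ih (1 - x) (by omega) _).mp h2
          simpa using this
        refine ⟨dd, hdd, ?_⟩
        cases inv
        · simp only [if_false, Bool.false_eq_true] at h1 ⊢
          have harg : (fun i => Function.update v (1 - x) dd (![x, 1 - x] i)) = ![v x, dd] := by
            funext i; fin_cases i <;> simp [Function.update_of_ne hne]
          simp only [Fml.Sat] at h1
          rwa [harg] at h1
        · simp only [if_true] at h1 ⊢
          have harg : (fun i => Function.update v (1 - x) dd (![1 - x, x] i)) = ![dd, v x] := by
            funext i; fin_cases i <;> simp [Function.update_of_ne hne]
          simp only [Fml.Sat] at h1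
          rwa [harg] at h1
      · rintro ⟨ee, hee, h1⟩
        refine ⟨ee, ?_, ?_⟩
        · cases inv
          · simp only [if_false, Bool.false_eq_true] at h1 ⊢
            show Fml.Sat A (Fml.rel 2 R ![x, 1-x]) _
            simp only [Fml.Sat]
            have harg : (fun i => Function.update v (1 - x) ee (![x, 1 - x] i)) = ![v x, ee] := by
              funext i; fin_cases i <;> simp [Function.update_of_ne hne]
            rwa [harg]
          · simp only [if_true] at h1 ⊢
            show Fml.Sat A (Fml.rel 2 R ![1-x, x]) _
            simp only [Fml.Sat]
            have harg : (fun i => Function.update v (1 - x) ee (![1 - x, x] i)) = ![ee, v x] := by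
              funext i; fin_cases i <;> simp [Function.update_of_ne hne]
            rwa [harg]
        · exact (ih (1 - x) (by omega) _).mpr (by simpa using hee)

lemma free_toFml : ∀ (C : Concept) (x : ℕ), x ≤ 1 → (C.toFml x).free ⊆ {x} := by
  intro C
  induction C with
  | top => intro x hx; simp [Concept.toFml, Fml.free]
  | atom c =>
      intro x hx m hm
      simp only [Concept.toFml, Fml.free] at hm
      obtain ⟨i, rfl⟩ := hm
      fin_cases i <;> simp
  | neg C ih => intro x hx; exact ih x hx
  | inter C D ihC ihD =>
      intro x hx m hm
      rcases hm with hm | hm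
      · exact ihC x hx hm
      · exact ihD x hx hm
  | exRole inv R C ih =>
      intro x hx m hm
      obtain ⟨hm1, hm2⟩ := hm
      simp only [Set.mem_singleton_iff] at hm2
      rcases hm1 with hm1 | hm1
      · have hm' : m = x ∨ m = 1 - x := by
          cases inv <;>
            simp only [Bool.false_eq_true, if_false, if_true, Fml.free] at hm1 <;>
            obtain ⟨i, rfl⟩ := hm1 <;> fin_cases i <;> simp
        rcases hm' with rfl | rfl
        · simp
        · exact absurd rfl hm2
      · have := ih (1 - x) (by omega) hm1
        simp only [Set.mem_singleton_iff] at this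
        exact absurd this hm2

lemma sig_toFml : ∀ (C : Concept) (x : ℕ), (C.toFml x).sig = C.csig := by
  intro C
  induction C with
  | top => intro x; simp [Concept.toFml, Fml.sig, Concept.csig]
  | atom c => intro x; simp [Concept.toFml, Fml.sig, Concept.csig]
  | neg C ih => intro x; simp [Concept.toFml, Fml.sig, Concept.csig, ih]
  | inter C D ihC ihD => intro x; simp [Concept.toFml, Fml.sig, Concept.csig, ihC, ihD]
  | exRole inv R C ih =>
      intro x
      cases inv <;>
        simp [Concept.toFml, Fml.sig, Concept.csig, ih, Set.singleton_union]

lemma sat_ext {D : Type} {ne ne' : Nonempty D} {rl : (k : ℕ) → ℕ → (Fin k → D) → Prop}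
    {c c' : ℕ → D} (φ : Fml) :
    ∀ v : ℕ → D, (Fml.Sat ⟨D, ne, rl, c⟩ φ v ↔ Fml.Sat ⟨D, ne', rl, c'⟩ φ v) := by
  induction φ <;> intro v <;> simp only [Fml.Sat, *]

lemma sat_CIfml (A : Str) (p : Concept × Concept) :
    (∀ v : ℕ → A.Dom, (CIfml p).Sat A v) ↔ p.1.interp A ⊆ p.2.interp A := by
  have key : ∀ (v : ℕ → A.Dom) (d0 : A.Dom),
      (((p.1.toFml 0).imp (p.2.toFml 0)).Sat A (Function.update v 0 d0)
        ↔ (d0 ∈ p.1.interp A → d0 ∈ p.2.interp A)) := by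
    intro v d0
    simp only [Fml.imp, Fml.Sat, sat_toFml A _ 0 (by norm_num), Function.update_self]
    tauto
  constructor
  · intro h z hz
    obtain ⟨v0⟩ := A.dom_nonempty
    have h1 := h (fun _ => v0)
    simp only [CIfml, Fml.Sat] at h1
    exact (key _ z).mp (h1 v0 z) hz
  · intro h v
    simp only [CIfml, Fml.Sat]
    intro d1 d0
    exact (key _ d0).mpr (fun hz => h hz)

end Aux


section Merge

variable (A B : Str) (d : A.Dom) (e : B.Dom)

/-- Domain of the structure obtained by merging `d ∈ A` with `e ∈ B` in `A ⊎ B`. -/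
abbrev MDom : Type := A.Dom ⊕ {x : B.Dom // x ≠ e}

def jA (x : A.Dom) : MDom A B e := Sum.inl x

open Classical in
noncomputable def jB (y : B.Dom) : MDom A B e :=
  if h : y = e then Sum.inl d else Sum.inr ⟨y, h⟩

def mrel (k R : ℕ) (t : Fin k → MDom A B e) : Prop :=
  (∃ s : Fin k → A.Dom, t = jA A B e ∘ s ∧ A.rel k R s) ∨
  (∃ s : Fin k → B.Dom, t = jB A B d e ∘ s ∧ B.rel k R s)

def mergeStr (cst : ℕ → MDom A B e) : Str :=
  ⟨MDom A B e, A.dom_nonempty.map Sum.inl, mrel A B d e, cst⟩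

lemma jA_inj {x y : A.Dom} (h : jA A B e x = jA A B e y) : x = y := Sum.inl.inj h

lemma jB_inj {x y : B.Dom} (h : jB A B d e x = jB A B d e y) : x = y := by
  unfold jB at h
  by_cases hx : x = e <;> by_cases hy : y = e
  · rw [hx, hy]
  · rw [dif_pos hx, dif_neg hy] at h; exact absurd h (by simp)
  · rw [dif_neg hx, dif_pos hy] at h; exact absurd h (by simp)
  · rw [dif_neg hx, dif_neg hy] at h; simpa using h

lemma jA_eq_jB {x : A.Dom} {y : B.Dom} (h : jA A B e x = jB A B d e y) :
    y = e ∧ x = d := by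
  unfold jB at h
  split_ifs at h with h1
  · exact ⟨h1, Sum.inl.inj h⟩
  · exact absurd h (by simp [jA])

lemma jB_e : jB A B d e e = jA A B e d := by simp [jB, jA]

lemma mdom_cases (z : MDom A B e) :
    (∃ x, z = jA A B e x) ∨ ∃ y, z = jB A B d e y := by
  rcases z with x | ⟨y, hy⟩
  · exact Or.inl ⟨x, rfl⟩
  · exact Or.inr ⟨y, by simp [jB, hy]⟩

variable (cst : ℕ → MDom A B e)

lemma mrel1 (c : ℕ) (z : MDom A B e) :
    (mergeStr A B d e cst).rel 1 c ![z] ↔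
      (∃ x, z = jA A B e x ∧ A.rel 1 c ![x]) ∨
      (∃ y, z = jB A B d e y ∧ B.rel 1 c ![y]) := by
  show mrel A B d e 1 c ![z] ↔ _
  unfold mrel
  constructor
  · rintro (⟨s, hs, hr⟩ | ⟨s, hs, hr⟩)
    · refine Or.inl ⟨s 0, by simpa using congrFun hs 0, ?_⟩
      have h0 : ![s 0] = s := by funext i; fin_cases i; simp
      rwa [h0]
    · refine Or.inr ⟨s 0, by simpa using congrFun hs 0, ?_⟩
      have h0 : ![s 0] = s := by funext i; fin_cases i; simp
      rwa [h0]
  · rintro (⟨x, rfl, hr⟩ | ⟨y, rfl, hr⟩)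
    · exact Or.inl ⟨![x], by funext i; fin_cases i; simp, hr⟩
    · exact Or.inr ⟨![y], by funext i; fin_cases i; simp, hr⟩

lemma mrel2 (R : ℕ) (z w : MDom A B e) :
    (mergeStr A B d e cst).rel 2 R ![z, w] ↔
      (∃ x x', z = jA A B e x ∧ w = jA A B e x' ∧ A.rel 2 R ![x, x']) ∨
      (∃ y y', z = jB A B d e y ∧ w = jB A B d e y' ∧ B.rel 2 R ![y, y']) := by
  show mrel A B d e 2 R ![z, w] ↔ _
  unfold mrel
  constructor
  · rintro (⟨s, hs, hr⟩ | ⟨s, hs, hr⟩)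
    · refine Or.inl ⟨s 0, s 1, by simpa using congrFun hs 0, by simpa using congrFun hs 1, ?_⟩
      have h0 : ![s 0, s 1] = s := by funext i; fin_cases i <;> simp
      rwa [h0]
    · refine Or.inr ⟨s 0, s 1, by simpa using congrFun hs 0, by simpa using congrFun hs 1, ?_⟩
      have h0 : ![s 0, s 1] = s := by funext i; fin_cases i <;> simp
      rwa [h0]
  · rintro (⟨x, x', rfl, rfl, hr⟩ | ⟨y, y', rfl, rfl, hr⟩)
    · exact Or.inl ⟨![x, x'], by funext i; fin_cases i <;> simp, hr⟩
    · exact Or.inr ⟨![y, y'], by funext i; fin_cases i <;> simp, hr⟩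

lemma edge_iff (inv : Bool) (R : ℕ) (u w : MDom A B e) :
    (if inv then (mergeStr A B d e cst).rel 2 R ![w, u]
      else (mergeStr A B d e cst).rel 2 R ![u, w]) ↔
      ((∃ x x', u = jA A B e x ∧ w = jA A B e x' ∧
          (if inv then A.rel 2 R ![x', x] else A.rel 2 R ![x, x'])) ∨
       (∃ y y', u = jB A B d e y ∧ w = jB A B d e y' ∧
          (if inv then B.rel 2 R ![y', y] else B.rel 2 R ![y, y']))) := by
  cases inv
  · simp only [Bool.false_eq_true, if_false]
    exact mrel2 A B d e cst R u w
  · simp only [if_true]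
    rw [mrel2]
    constructor
    · rintro (⟨x, x', h1, h2, h3⟩ | ⟨y, y', h1, h2, h3⟩)
      · exact Or.inl ⟨x', x, h2, h1, h3⟩
      · exact Or.inr ⟨y', y, h2, h1, h3⟩
    · rintro (⟨x, x', h1, h2, h3⟩ | ⟨y, y', h1, h2, h3⟩)
      · exact Or.inl ⟨x', x, h2, h1, h3⟩
      · exact Or.inr ⟨y', y, h2, h1, h3⟩

lemma interp_transfer (K : ALCIKB)
    (htp : ∀ C ∈ K.cl, (d ∈ C.interp A ↔ e ∈ C.interp B)) :
    ∀ C ∈ K.cl,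
      (∀ x : A.Dom, (jA A B e x ∈ C.interp (mergeStr A B d e cst) ↔ x ∈ C.interp A)) ∧
      (∀ y : B.Dom, (jB A B d e y ∈ C.interp (mergeStr A B d e cst) ↔ y ∈ C.interp B)) := by
  intro C
  induction C with
  | top => intro _; exact ⟨fun _ => iff_of_true trivial trivial, fun _ => iff_of_true trivial trivial⟩
  | atom c =>
      intro hcl
      constructor
      · intro x
        show (mergeStr A B d e cst).rel 1 c ![jA A B e x] ↔ A.rel 1 c ![x]
        rw [mrel1]
        constructor
        · rintro (⟨x', hx', hr⟩ | ⟨y, hy, hr⟩)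
          · rwa [jA_inj A B e hx']
          · obtain ⟨hy1, hx1⟩ := jA_eq_jB A B d e hy
            rw [hy1] at hr
            rw [hx1]
            exact (htp _ hcl).mpr hr
        · intro h; exact Or.inl ⟨x, rfl, h⟩
      · intro y
        show (mergeStr A B d e cst).rel 1 c ![jB A B d e y] ↔ B.rel 1 c ![y]
        rw [mrel1]
        constructor
        · rintro (⟨x, hx, hr⟩ | ⟨y', hy', hr⟩)
          · obtain ⟨hy1, hx1⟩ := jA_eq_jB A B d e hx.symm
            rw [hx1] at hr
            rw [hy1]
            exact (htp _ hcl).mp hr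
          · rwa [jB_inj A B d e hy']
        · intro h; exact Or.inr ⟨y, rfl, h⟩
  | neg C ih =>
      intro hcl
      have hC : C ∈ K.cl :=
        cl_subclosed K hcl (by simp [Concept.subconcepts, mem_subconcepts_self])
      obtain ⟨ih1, ih2⟩ := ih hC
      exact ⟨fun x => not_congr (ih1 x),
             fun y => not_congr (ih2 y)⟩
  | inter C D ihC ihD =>
      intro hcl
      have hC : C ∈ K.cl :=
        cl_subclosed K hcl (by simp [Concept.subconcepts, mem_subconcepts_self])
      have hD : D ∈ K.cl :=
        cl_subclosed K hcl (by simp [Concept.subconcepts, mem_subconcepts_self])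
      obtain ⟨ihC1, ihC2⟩ := ihC hC
      obtain ⟨ihD1, ihD2⟩ := ihD hD
      exact ⟨fun x => and_congr (ihC1 x) (ihD1 x),
             fun y => and_congr (ihC2 y) (ihD2 y)⟩
  | exRole inv R C ih =>
      intro hcl
      have hC : C ∈ K.cl :=
        cl_subclosed K hcl (by simp [Concept.subconcepts, mem_subconcepts_self])
      obtain ⟨ih1, ih2⟩ := ih hC
      constructor
      · intro x
        simp only [Concept.interp, Set.mem_setOf_eq]
        constructor
        · rintro ⟨z, hz, hedge⟩
          replace hedge := (edge_iff A B d e cst inv R _ _).mp hedge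
          rcases hedge with ⟨x0, x', h1, h2, h3⟩ | ⟨y0, y', h1, h2, h3⟩
          · obtain rfl := jA_inj A B e h1
            subst h2
            exact ⟨x', (ih1 x').mp hz, h3⟩
          · obtain ⟨hy1, hx1⟩ := jA_eq_jB A B d e h1
            subst h2
            rw [hy1] at h3
            rw [hx1]
            exact (htp _ hcl).mpr ⟨y', (ih2 y').mp hz, h3⟩
        · rintro ⟨ee, hee, h3⟩
          exact ⟨jA A B e ee, (ih1 ee).mpr hee,
            (edge_iff A B d e cst inv R _ _).mpr (Or.inl ⟨x, ee, rfl, rfl, h3⟩)⟩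
      · intro y
        simp only [Concept.interp, Set.mem_setOf_eq]
        constructor
        · rintro ⟨z, hz, hedge⟩
          replace hedge := (edge_iff A B d e cst inv R _ _).mp hedge
          rcases hedge with ⟨x0, x', h1, h2, h3⟩ | ⟨y0, y', h1, h2, h3⟩
          · obtain ⟨hy1, hx1⟩ := jA_eq_jB A B d e h1.symm
            subst h2
            rw [hx1] at h3
            rw [hy1]
            exact (htp _ hcl).mp ⟨x', (ih1 x').mp hz, h3⟩
          · obtain rfl := jB_inj A B d e h1
            subst h2
            exact ⟨y', (ih2 y').mp hz, h3⟩
        · rintro ⟨ee, hee, h3⟩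
          exact ⟨jB A B d e ee, (ih2 ee).mpr hee,
            (edge_iff A B d e cst inv R _ _).mpr (Or.inr ⟨y, ee, rfl, rfl, h3⟩)⟩

lemma mergeStr_model (K : ALCIKB) (hA : A.IsModel K.toKB) (hB : B.IsModel K.toKB)
    (htp : ∀ C ∈ K.cl, (d ∈ C.interp A ↔ e ∈ C.interp B))
    (hdb : ∀ a ∈ K.db.atoms, a.Holds (mergeStr A B d e cst) cst) :
    (mergeStr A B d e cst).IsModel K.toKB := by
  constructor
  · rintro φ ⟨p, hp, rfl⟩
    refine (sat_CIfml _ p).mpr ?_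
    intro z hz
    obtain ⟨h1cl, h2cl⟩ := onto_mem_cl K hp
    have hCI : p.1.interp A ⊆ p.2.interp A :=
      (sat_CIfml A p).mp (hA.1 (CIfml p) (Set.mem_image_of_mem _ hp))
    have hCIB : p.1.interp B ⊆ p.2.interp B :=
      (sat_CIfml B p).mp (hB.1 (CIfml p) (Set.mem_image_of_mem _ hp))
    rcases mdom_cases A B d e z with ⟨x, rfl⟩ | ⟨y, rfl⟩
    · exact ((interp_transfer A B d e cst K htp p.2 h2cl).1 x).mpr
        (hCI (((interp_transfer A B d e cst K htp p.1 h1cl).1 x).mp hz))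
    · exact ((interp_transfer A B d e cst K htp p.2 h2cl).2 y).mpr
        (hCIB (((interp_transfer A B d e cst K htp p.1 h1cl).2 y).mp hz))
  · exact hdb

lemma holds_jA (K : ALCIKB) (hA : A.IsModel K.toKB) :
    ∀ a ∈ K.db.atoms,
      a.Holds (mergeStr A B d e (fun c => jA A B e (A.const c)))
        (fun c => jA A B e (A.const c)) := by
  intro a ha
  exact Or.inl ⟨fun i => A.const (a.args i), rfl, hA.2 a ha⟩

lemma holds_jB (K : ALCIKB) (hB : B.IsModel K.toKB) :
    ∀ a ∈ K.db.atoms,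
      a.Holds (mergeStr A B d e (fun c => jB A B d e (B.const c)))
        (fun c => jB A B d e (B.const c)) := by
  intro a ha
  exact Or.inr ⟨fun i => B.const (a.args i), rfl, hB.2 a ha⟩

end Merge


section Aux2

/-! #### Finiteness of `cl` -/

lemma subconcepts_finite : ∀ C : Concept, C.subconcepts.Finite := by
  intro C
  induction C with
  | top => exact Set.finite_singleton _
  | atom c => exact Set.finite_singleton _
  | neg C ih => exact ih.insert _
  | inter C D ihC ihD => exact (ihC.union ihD).insert _
  | exRole i R C ih => exact ih.insert _

lemma fml_sig_finite : ∀ φ : Fml, φ.sig.Finite := by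
  intro φ
  induction φ with
  | eq x y => exact Set.finite_empty
  | rel k R v => exact Set.finite_singleton _
  | neg φ ih => exact ih
  | and φ ψ ihφ ihψ => exact ihφ.union ihψ
  | or φ ψ ihφ ihψ => exact ihφ.union ihψ
  | ex y φ ih => exact ih
  | all y φ ih => exact ih

lemma sigK_finite (K : ALCIKB) : K.sigK.Finite := by
  refine Set.Finite.union ?_ (K.db.finite.image _)
  exact (K.toKB.onto_finite).biUnion fun φ _ => fml_sig_finite φ

lemma cl_finite (K : ALCIKB) : K.cl.Finite := by
  have hX : (clX K).Finite := by
    refine Set.Finite.union (Set.Finite.union ?_ ?_) ?_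
    · exact K.onto_finite.biUnion fun p _ =>
        (subconcepts_finite p.1).union (subconcepts_finite p.2)
    · refine Set.Finite.biUnion ?_ fun C _ => subconcepts_finite C
      refine Set.Finite.subset (K.db.finite.image fun a => Concept.atom a.rel) ?_
      rintro C ⟨a, ha, h1, rfl⟩
      exact ⟨a, ha, rfl⟩
    · refine Set.Finite.biUnion ?_ fun C _ => subconcepts_finite C
      refine Set.Finite.subset
        (((sigK_finite K).prod (Set.finite_univ (α := Bool))).image
          fun q : (ℕ × ℕ) × Bool => Concept.exRole q.2 q.1.2 Concept.top) ?_
      rintro C ⟨R, i, hR, rfl⟩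
      exact ⟨((2, R), i), ⟨hR, trivial⟩, rfl⟩
  rw [cl_eq]
  exact hX.union (hX.image _)

/-! #### Signatures of concepts in `cl` -/

lemma csig_mono : ∀ (C D : Concept), D ∈ C.subconcepts → D.csig ⊆ C.csig := by
  intro C
  induction C with
  | top =>
      intro D hD; simp only [Concept.subconcepts, Set.mem_singleton_iff] at hD
      subst hD; exact subset_rfl
  | atom c =>
      intro D hD; simp only [Concept.subconcepts, Set.mem_singleton_iff] at hD
      subst hD; exact subset_rfl
  | neg C ih =>
      intro D hD
      simp only [Concept.subconcepts, Set.mem_insert_iff] at hD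
      rcases hD with rfl | hD
      · exact subset_rfl
      · exact ih D hD
  | inter C1 C2 ih1 ih2 =>
      intro D hD
      simp only [Concept.subconcepts, Set.mem_insert_iff, Set.mem_union] at hD
      rcases hD with rfl | hD | hD
      · exact subset_rfl
      · exact (ih1 D hD).trans Set.subset_union_left
      · exact (ih2 D hD).trans Set.subset_union_right
  | exRole i R C ih =>
      intro D hD
      simp only [Concept.subconcepts, Set.mem_insert_iff] at hD
      rcases hD with rfl | hD
      · exact subset_rfl
      · exact (ih D hD).trans (Set.subset_insert _ _)

lemma sig_CIfml (p : Concept × Concept) : (CIfml p).sig = p.1.csig ∪ p.2.csig := by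
  simp [CIfml, Fml.imp, Fml.sig, sig_toFml]

lemma cl_csig (K : ALCIKB) : ∀ C ∈ K.cl, C.csig ⊆ K.sigK := by
  have hX : ∀ C ∈ clX K, C.csig ⊆ K.sigK := by
    rintro C ((h | h) | h)
    · obtain ⟨p, hp, hsub⟩ := Set.mem_iUnion₂.mp h
      have hs : (CIfml p).sig ⊆ K.sigK := by
        intro q hq
        exact Set.mem_union_left _ (Set.mem_biUnion (Set.mem_image_of_mem _ hp) hq)
      rw [sig_CIfml] at hs
      rcases hsub with h1 | h1
      · exact (csig_mono _ _ h1).trans ((Set.subset_union_left).trans hs)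
      · exact (csig_mono _ _ h1).trans ((Set.subset_union_right).trans hs)
    · obtain ⟨C0, ⟨a, ha, h1, rfl⟩, hsub⟩ := Set.mem_iUnion₂.mp h
      refine (csig_mono _ _ hsub).trans ?_
      intro q hq
      simp only [Concept.csig, Set.mem_singleton_iff] at hq
      subst hq
      refine Set.mem_union_right _ ⟨a, ha, ?_⟩
      simp only []
      rw [h1]
    · obtain ⟨C0, ⟨R, i, hR, rfl⟩, hsub⟩ := Set.mem_iUnion₂.mp h
      refine (csig_mono _ _ hsub).trans ?_
      intro q hq
      simp only [Concept.csig, Set.mem_insert_iff, Set.mem_empty_iff_false, or_false] at hq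
      subst hq
      exact hR
  intro C hC
  rw [cl_eq] at hC
  simp only [Set.mem_union, Set.mem_image] at hC
  rcases hC with hC | ⟨C0, hC0, rfl⟩
  · exact hX C hC
  · exact hX C0 hC0

/-! #### Conjunctions and disjunctions of lists of concepts -/

def binter : List Concept → Concept
  | [] => Concept.top
  | C :: l => Concept.inter C (binter l)

lemma mem_binter (A : Str) : ∀ (l : List Concept) (z : A.Dom),
    z ∈ (binter l).interp A ↔ ∀ C ∈ l, z ∈ C.interp A := by
  intro l
  induction l with
  | nil => intro z; simp [binter, Concept.interp]
  | cons C l ih => intro z; simp [binter, Concept.interp, ih z]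

lemma csig_binter : ∀ l : List Concept, ∀ q ∈ (binter l).csig, ∃ C ∈ l, q ∈ C.csig := by
  intro l
  induction l with
  | nil => intro q hq; simp [binter, Concept.csig] at hq
  | cons C l ih =>
      intro q hq
      rcases hq with hq | hq
      · exact ⟨C, by simp, hq⟩
      · obtain ⟨C', hC', h⟩ := ih q hq
        exact ⟨C', by simp [hC'], h⟩

def bunionC (l : List Concept) : Concept := .neg (binter (l.map .neg))

lemma mem_bunionC (A : Str) (l : List Concept) (z : A.Dom) :
    z ∈ (bunionC l).interp A ↔ ∃ C ∈ l, z ∈ C.interp A := by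
  simp only [bunionC, Concept.interp, Set.mem_compl_iff, mem_binter]
  constructor
  · intro h
    by_contra hc
    push_neg at hc
    apply h
    intro C hC
    obtain ⟨C0, hC0, rfl⟩ := List.mem_map.mp hC
    simp only [Concept.interp, Set.mem_compl_iff]
    exact hc C0 hC0
  · rintro ⟨C, hC, hz⟩ hall
    have := hall _ (List.mem_map_of_mem hC)
    simp only [Concept.interp, Set.mem_compl_iff] at this
    exact this hz

lemma csig_bunionC (l : List Concept) : ∀ q ∈ (bunionC l).csig, ∃ C ∈ l, q ∈ C.csig := by
  intro q hq
  obtain ⟨C', hC', h⟩ := csig_binter _ q hq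
  obtain ⟨C0, hC0, rfl⟩ := List.mem_map.mp hC'
  exact ⟨C0, hC0, h⟩

/-! #### Types -/

lemma tp_subset_cl (K : ALCIKB) (A : Str) (z : A.Dom) : K.tp A z ⊆ K.cl :=
  fun _ hC => hC.1

lemma mem_neg_interp (A : Str) (C : Concept) (z : A.Dom) :
    z ∈ (Concept.neg C).interp A ↔ z ∉ C.interp A := Iff.rfl

lemma tp_eq_of (K : ALCIKB) {A A' : Str} {z : A.Dom} {z' : A'.Dom} {t : Set Concept}
    (ht : K.tp A' z' = t) (h : ∀ C ∈ t, z ∈ C.interp A) : K.tp A z = t := by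
  subst ht
  ext C
  constructor
  · rintro ⟨hcl, hz⟩
    by_contra hC
    rcases cl_neg_closed K C hcl with hneg | ⟨C', rfl, hC'⟩
    · have h1 : Concept.neg C ∈ K.tp A' z' := ⟨hneg, fun hmem => hC ⟨hcl, hmem⟩⟩
      exact (h _ h1) hz
    · have hC'notin : C' ∉ K.tp A' z' := fun hmem => hz (h _ hmem)
      have hz' : z' ∈ (Concept.neg C').interp A' := fun hzin => hC'notin ⟨hC', hzin⟩
      exact hC ⟨hcl, hz'⟩
  · intro hmem
    exact ⟨tp_subset_cl K A' z' hmem, h _ hmem⟩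

end Aux2


open Classical in
/-- The conjunction of the concepts in `t ∩ cl(K)`, as a single concept. -/
noncomputable def conjType (K : ALCIKB) (h : K.cl.Finite) (t : Set Concept) : Concept :=
  binter ((h.toFinset.filter (fun C => C ∈ t)).toList)

open Classical in
lemma mem_conjType (K : ALCIKB) (h : K.cl.Finite) (t : Set Concept) (hts : t ⊆ K.cl)
    (A : Str) (z : A.Dom) :
    z ∈ (conjType K h t).interp A ↔ ∀ C ∈ t, z ∈ C.interp A := by
  rw [conjType, mem_binter]
  constructor
  · intro hh C hC
    refine hh C ?_
    rw [Finset.mem_toList, Finset.mem_filter, Set.Finite.mem_toFinset]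
    exact ⟨hts hC, hC⟩
  · intro hh C hC
    rw [Finset.mem_toList, Finset.mem_filter] at hC
    exact hh C hC.2

open Classical in
lemma csig_conjType (K : ALCIKB) (h : K.cl.Finite) (t : Set Concept) :
    ∀ q ∈ (conjType K h t).csig, ∃ C ∈ K.cl, q ∈ C.csig := by
  intro q hq
  obtain ⟨C, hC, hq1⟩ := csig_binter _ q hq
  rw [Finset.mem_toList, Finset.mem_filter, Set.Finite.mem_toFinset] at hC
  exact ⟨C, hC.1, hq1⟩

/-- characterization of strong separability for labeled ALCI-KBs
in terms of K-types. -/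
theorem statement_4 (K : ALCIKB) (P N : Set ℕ) (hPne : P.Nonempty) (hNne : N.Nonempty)
    (hPcons : ∀ a ∈ P, a ∈ K.db.consts) (hNcons : ∀ b ∈ N, b ∈ K.db.consts) :
    List.TFAE
      [K.CStronglySeparable P N,
       NonProjStronglySeparable Set.univ K.toKB
         {t : Fin 1 → ℕ | t 0 ∈ P} {t : Fin 1 → ℕ | t 0 ∈ N},
       ∀ a ∈ P, ∀ b ∈ N,
         ¬ ∃ A B : Str, A.IsModel K.toKB ∧ B.IsModel K.toKB ∧
             K.tp A (A.const a) = K.tp B (B.const b),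
       (∀ a ∈ P, ∀ A : Str, A.IsModel K.toKB →
           ∃ t : Set Concept, (∃ a' ∈ P, K.RealizableAt a' t) ∧
             ∀ C ∈ t, A.const a ∈ C.interp A) ∧
       (∀ b ∈ N, ∀ A : Str, A.IsModel K.toKB →
           ¬ ∃ t : Set Concept, (∃ a' ∈ P, K.RealizableAt a' t) ∧
             ∀ C ∈ t, A.const b ∈ C.interp A)] := by
  classical
  tfae_have 3 → 1 := by
    intro h3
    have hclfin := cl_finite K
    have hTsub : ∀ t ∈ {t : Set Concept | ∃ a ∈ P, K.RealizableAt a t}, t ⊆ K.cl := by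
      rintro t ⟨a, ha, A, hA, ht⟩
      rw [← ht]; exact tp_subset_cl K A _
    have hTfin : {t : Set Concept | ∃ a ∈ P, K.RealizableAt a t}.Finite :=
      hclfin.finite_subsets.subset hTsub
    refine ⟨bunionC (hTfin.toFinset.toList.map (conjType K hclfin)), ?_, ?_, ?_⟩
    · intro q hq
      obtain ⟨C1, hC1, hq1⟩ := csig_bunionC _ q hq
      obtain ⟨t, ht, rfl⟩ := List.mem_map.mp hC1
      obtain ⟨C2, hC2, hq2⟩ := csig_conjType K hclfin t q hq1
      exact cl_csig K C2 hC2 hq2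
    · intro a ha A hA
      have htT : K.tp A (A.const a) ∈ hTfin.toFinset := by
        rw [Set.Finite.mem_toFinset]; exact ⟨a, ha, A, hA, rfl⟩
      rw [mem_bunionC]
      refine ⟨conjType K hclfin (K.tp A (A.const a)),
        List.mem_map_of_mem (Finset.mem_toList.mpr htT), ?_⟩
      rw [mem_conjType K hclfin _ (tp_subset_cl K A _)]
      exact fun C hC => hC.2
    · intro b hb A hA hz
      rw [mem_bunionC] at hz
      obtain ⟨C1, hC1, hz1⟩ := hz
      obtain ⟨t, htmem, rfl⟩ := List.mem_map.mp hC1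
      rw [Finset.mem_toList, Set.Finite.mem_toFinset] at htmem
      obtain ⟨a', ha', A', hA', ht'⟩ := htmem
      have hall : ∀ C ∈ t, A.const b ∈ C.interp A := by
        rw [← mem_conjType K hclfin t (hTsub t ⟨a', ha', A', hA', ht'⟩)]
        exact hz1
      exact h3 a' ha' b hb ⟨A', A, hA', hA, by rw [ht', tp_eq_of K ht' hall]⟩
  tfae_have 1 → 2 := by
    rintro ⟨C, hsig, hpos, hneg⟩
    refine ⟨C.toFml 0, Set.mem_univ _, ?_, ?_, ?_, ?_⟩
    · rw [sig_toFml]; exact hsig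
    · intro m hm
      have := free_toFml C 0 (by norm_num) hm
      simp only [Set.mem_singleton_iff] at this
      omega
    · intro t htP A hA v hv
      have h0 : v 0 = A.const (t 0) := by simpa using hv 0
      rw [sat_toFml A C 0 (by norm_num), h0]
      exact hpos (t 0) htP A hA
    · intro t htN A hA v hv
      intro hsat
      have h0 : v 0 = A.const (t 0) := by simpa using hv 0
      rw [sat_toFml A C 0 (by norm_num), h0] at hsat
      exact hneg (t 0) htN A hA hsat
  tfae_have 2 → 3 := by
    rintro ⟨φ, -, hsig, hfree, hpos, hneg⟩ a ha b hb ⟨A, B, hA, hB, htpe⟩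
    have htp : ∀ C ∈ K.cl, (A.const a ∈ C.interp A ↔ B.const b ∈ C.interp B) := by
      intro C hC
      constructor
      · intro h
        have h1 : C ∈ K.tp A (A.const a) := ⟨hC, h⟩
        rw [htpe] at h1; exact h1.2
      · intro h
        have h1 : C ∈ K.tp B (B.const b) := ⟨hC, h⟩
        rw [← htpe] at h1; exact h1.2
    have hMA := mergeStr_model A B (A.const a) (B.const b)
      (fun c => jA A B (B.const b) (A.const c)) K hA hB htp
      (holds_jA A B (A.const a) (B.const b) K hA)
    have hMB := mergeStr_model A B (A.const a) (B.const b)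
      (fun c => jB A B (A.const a) (B.const b) (B.const c)) K hA hB htp
      (holds_jB A B (A.const a) (B.const b) K hB)
    have h1 := hpos (fun _ => a) ha _ hMA
      (fun _ => jA A B (B.const b) (A.const a)) (fun _ => rfl)
    have h2 := hneg (fun _ => b) hb _ hMB
      (fun _ => jA A B (B.const b) (A.const a))
      (fun _ => (jB_e A B (A.const a) (B.const b)).symm)
    exact h2 ((sat_ext φ (fun _ => jA A B (B.const b) (A.const a))).mp h1)
  tfae_have 3 → 4 := by
    intro h3
    constructor
    · intro a ha A hA
      exact ⟨K.tp A (A.const a), ⟨a, ha, A, hA, rfl⟩, fun C hC => hC.2⟩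
    · rintro b hb A hA ⟨t, ⟨a', ha', A', hA', ht⟩, hall⟩
      exact h3 a' ha' b hb ⟨A', A, hA', hA, by rw [ht, tp_eq_of K ht hall]⟩
  tfae_have 4 → 3 := by
    rintro ⟨h41, h42⟩ a ha b hb ⟨A, B, hA, hB, htpe⟩
    obtain ⟨t, htre, hall⟩ := h41 a ha A hA
    refine h42 b hb B hB ⟨t, htre, ?_⟩
    intro C hC
    obtain ⟨a', ha', A', hA', ht'⟩ := htre
    have hC' := hC
    rw [← ht'] at hC'
    have h1 : C ∈ K.tp A (A.const a) := ⟨hC'.1, hall C hC⟩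
    rw [htpe] at h1
    exact h1.2
  tfae_finish

end Sep
end
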